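/- arXiv:2309.01801 — 2 statements merged into one kernel-verified Lean document; each statement's English description precedes it below -/
import Mathlib

section
/- Suppose p(N)·N^{(h-1)/h} → 0 as N → ∞. Then |L(A)| ∼ (N·p(N))^h / θ_L, i.e., θ_L·|L(A)| / (N·p(N))^h converges to 1 in probability as N → ∞. -/
open MeasureTheory Finset Filter

namespace HM

/-- Bernoulli measure on `Bool` with success probability `p`. -/
noncomputable def bern (p : ℝ) : Measure Bool :=
  ENNReal.ofReal p • Measure.dirac true + ENNReal.ofReal (1 - p) • Measure.dirac false

instance (p : ℝ) : IsFiniteMeasure (bern p) := by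
  constructor
  rw [bern, Measure.add_apply, Measure.smul_apply, Measure.smul_apply]
  exact ENNReal.add_lt_top.2
    ⟨ENNReal.mul_lt_top ENNReal.ofReal_lt_top (measure_lt_top _ _),
     ENNReal.mul_lt_top ENNReal.ofReal_lt_top (measure_lt_top _ _)⟩

/-- The binomial random-subset model on `{0, 1, ..., N}`: each element is included
independently with probability `p`.  Sample points are functions `Fin (N+1) → Bool`. -/
noncomputable def coin (N : ℕ) (p : ℝ) : Measure (Fin (N + 1) → Bool) :=
  Measure.pi fun _ => bern p

/-- `s_L`, the sum of the positive coefficients. -/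
def sL (h : ℕ) (u : Fin h → ℤ) : ℤ := ∑ i ∈ univ.filter fun i => 0 < u i, u i

/-- `d_L`, the sum of the absolute values of the negative coefficients. -/
def dL (h : ℕ) (u : Fin h → ℤ) : ℤ := ∑ i ∈ univ.filter fun i => u i < 0, |u i|

/-- `m_L = s_L + d_L`. -/
def mL (h : ℕ) (u : Fin h → ℤ) : ℤ := sL h u + dL h u

/-- `θ_L`, the number of permutations fixing the coefficient vector. -/
noncomputable def thetaL (h : ℕ) (u : Fin h → ℤ) : ℕ :=
  Nat.card {σ : Equiv.Perm (Fin h) // ∀ i, u (σ i) = u i}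

/-- `L(A)`: the set of values `u₁a₁ + ⋯ + u_h a_h` with all `aᵢ ∈ A`,
where `A ⊆ {0,...,N}` is encoded by `ω : Fin (N+1) → Bool`. -/
def LA (h N : ℕ) (u : Fin h → ℤ) (ω : Fin (N + 1) → Bool) : Finset ℤ :=
  (univ.filter fun a : Fin h → Fin (N + 1) => ∀ i, ω (a i) = true).image
    fun a => ∑ i, u i * ((a i : ℕ) : ℤ)

/-- `L(A)^c`: the complement of `L(A)` inside `[-d_L N, s_L N]`. -/
noncomputable def LAc (h N : ℕ) (u : Fin h → ℤ) (ω : Fin (N + 1) → Bool) : Finset ℤ :=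
  Finset.Icc (-(dL h u * N)) (sL h u * N) \ LA h N u ω

/-- The density of the Irwin–Hall distribution of order `h`. -/
noncomputable def IH (h : ℕ) (x : ℝ) : ℝ :=
  if x ≤ h then
    (1 / (Nat.factorial (h - 1) : ℝ)) *
      ∑ j ∈ Finset.range (h + 1), (-1 : ℝ) ^ j * (h.choose j) * (max (x - j) 0) ^ (h - 1)
  else 0

end HM

namespace HMP
open HM

variable {n N : ℕ} {p : ℝ}

/-- weight of an outcome -/
def wgt (p : ℝ) (ω : Fin n → Bool) : ℝ := ∏ i, if ω i then p else 1 - p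

lemma wgt_nonneg (h0 : 0 ≤ p) (h1 : p ≤ 1) (ω : Fin n → Bool) : 0 ≤ wgt p ω :=
  Finset.prod_nonneg fun i _ => by by_cases hb : ω i <;> simp [hb] <;> linarith

lemma sum_wgt_cond (hp0 : 0 ≤ p) (S : Finset (Fin n))
    [I : ∀ ω : Fin n → Bool, Decidable (∀ x ∈ S, ω x = true)] :
    ∑ ω : Fin n → Bool, wgt p ω * (if ∀ x ∈ S, ω x = true then 1 else 0) = p ^ S.card := by
  classical
  have key : ∀ ω : Fin n → Bool, wgt p ω * (if ∀ x ∈ S, ω x = true then 1 else 0)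
      = ∏ i, ((if ω i then p else 1 - p) * (if i ∈ S then (if ω i = true then 1 else 0) else 1)) := by
    intro ω
    rw [Finset.prod_mul_distrib, wgt]
    congr 1
    rw [Finset.prod_ite_mem, Finset.univ_inter, Finset.prod_boole]
    congr
  simp_rw [key]
  have hps := Finset.prod_univ_sum (fun _ : Fin n => (Finset.univ : Finset Bool))
    (fun i b => (if b then p else 1 - p) * (if i ∈ S then (if b = true then 1 else 0) else 1))
  rw [Fintype.piFinset_univ] at hps
  rw [← hps]
  have hone : ∀ i : Fin n,
      (∑ b : Bool, (if b then p else 1 - p) * (if i ∈ S then (if b = true then 1 else 0) else 1))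
      = if i ∈ S then p else 1 := by
    intro i
    rw [Fintype.sum_bool]
    by_cases hi : i ∈ S <;> simp [hi] <;> ring
  simp_rw [hone]
  rw [Finset.prod_ite_mem, Finset.univ_inter, Finset.prod_const]

lemma sum_wgt_one (hp0 : 0 ≤ p) : ∑ ω : Fin n → Bool, wgt p ω = 1 := by
  classical
  have := sum_wgt_cond (n := n) hp0 ∅
  simpa using this

lemma sum_wgt_card {α : Type*} [Fintype α] [DecidableEq α] (hp0 : 0 ≤ p) (T : Finset α)
    (rng : α → Finset (Fin n)) [∀ a (ω : Fin n → Bool), Decidable (∀ x ∈ rng a, ω x = true)] :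
    ∑ ω : Fin n → Bool, wgt p ω * ((T.filter fun a => ∀ x ∈ rng a, ω x = true).card : ℝ)
      = ∑ a ∈ T, p ^ (rng a).card := by
  have hcf : ∀ ω : Fin n → Bool, ((T.filter fun a => ∀ x ∈ rng a, ω x = true).card : ℝ)
      = ∑ a ∈ T, (if ∀ x ∈ rng a, ω x = true then 1 else 0) := by
    intro ω; rw [Finset.card_filter]; push_cast; rfl
  simp_rw [hcf, Finset.mul_sum]
  rw [Finset.sum_comm]
  exact Finset.sum_congr rfl fun a _ => sum_wgt_cond hp0 (rng a)

lemma measurableSet_all (S : Set (Fin n → Bool)) : MeasurableSet S :=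
  (Set.to_countable S).measurableSet

lemma bern_singleton (b : Bool) : bern p {b} = ENNReal.ofReal (if b then p else 1 - p) := by
  cases b <;> simp [bern, Measure.dirac_apply']

lemma coin_singleton (hp0 : 0 ≤ p) (hp1 : p ≤ 1) (ω : Fin (N + 1) → Bool) :
    coin N p {ω} = ENNReal.ofReal (wgt p ω) := by
  rw [coin, ← Set.univ_pi_singleton, Measure.pi_pi]
  rw [wgt, ENNReal.ofReal_prod_of_nonneg (fun i _ => by by_cases hb : ω i <;> simp [hb] <;> linarith)]
  exact Finset.prod_congr rfl fun i _ => bern_singleton (ω i)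

lemma coin_finset (hp0 : 0 ≤ p) (hp1 : p ≤ 1) (F : Finset (Fin (N + 1) → Bool)) :
    coin N p ↑F = ENNReal.ofReal (∑ ω ∈ F, wgt p ω) := by
  rw [ENNReal.ofReal_sum_of_nonneg (fun ω _ => wgt_nonneg hp0 hp1 ω)]
  have hU : (↑F : Set (Fin (N + 1) → Bool)) = ⋃ ω ∈ F, {ω} := by ext x; simp
  rw [hU, measure_biUnion_finset ?_ (fun b _ => measurableSet_all _)]
  · exact Finset.sum_congr rfl fun ω _ => coin_singleton hp0 hp1 ω
  · intro x hx y hy hxy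
    simp [Function.onFun, Set.disjoint_singleton, hxy]

lemma coin_markov (hp0 : 0 ≤ p) (hp1 : p ≤ 1) (f : (Fin (N + 1) → Bool) → ℝ)
    (hf : ∀ ω, 0 ≤ f ω) {t : ℝ} (ht : 0 < t) :
    coin N p {ω | t ≤ f ω} ≤ ENNReal.ofReal ((∑ ω : Fin (N + 1) → Bool, wgt p ω * f ω) / t) := by
  classical
  set F := Finset.univ.filter fun ω : Fin (N + 1) → Bool => t ≤ f ω with hF
  have hsub : {ω | t ≤ f ω} ⊆ (↑F : Set _) := by
    intro ω hω; simp only [hF, Finset.coe_filter, Finset.mem_univ, true_and]; exact hω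
  calc coin N p {ω | t ≤ f ω} ≤ coin N p ↑F := measure_mono hsub
    _ = ENNReal.ofReal (∑ ω ∈ F, wgt p ω) := coin_finset hp0 hp1 F
    _ ≤ _ := by
        apply ENNReal.ofReal_le_ofReal
        rw [le_div_iff₀ ht]
        calc (∑ ω ∈ F, wgt p ω) * t = ∑ ω ∈ F, wgt p ω * t := by rw [Finset.sum_mul]
          _ ≤ ∑ ω ∈ F, wgt p ω * f ω := by
              apply Finset.sum_le_sum
              intro ω hω
              exact mul_le_mul_of_nonneg_left (by simpa [hF] using hω) (wgt_nonneg hp0 hp1 ω)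
          _ ≤ ∑ ω : Fin (N + 1) → Bool, wgt p ω * f ω :=
              Finset.sum_le_sum_of_subset_of_nonneg (Finset.subset_univ F)
                (fun ω _ _ => mul_nonneg (wgt_nonneg hp0 hp1 ω) (hf ω))


variable {ι : Type*} [Fintype ι] [DecidableEq ι]

noncomputable def pat {M r : ℕ} (hr : 0 < r) (c : ι → Fin M) : ι → Fin r :=
  if h : (Finset.image c Finset.univ).card = r then
    fun i => ((Finset.image c Finset.univ).orderIsoOfFin h).symm
      ⟨c i, Finset.mem_image_of_mem c (Finset.mem_univ i)⟩
  else fun _ => ⟨0, hr⟩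

noncomputable def enu {M r : ℕ} (hM : 0 < M) (hr : 0 < r) (c : ι → Fin M) : Fin r → Fin M :=
  if h : (Finset.image c Finset.univ).card = r then
    fun m => ((Finset.image c Finset.univ).orderIsoOfFin h m : Fin M)
  else fun _ => ⟨0, hM⟩

lemma enu_pat {M r : ℕ} (hM : 0 < M) (hr : 0 < r) {c : ι → Fin M}
    (h : (Finset.image c Finset.univ).card = r) (i : ι) :
    enu hM hr c (pat hr c i) = c i := by
  rw [pat, enu, dif_pos h, dif_pos h]
  simp

lemma enu_inj {M r : ℕ} (hM : 0 < M) (hr : 0 < r) {c : ι → Fin M}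
    (h : (Finset.image c Finset.univ).card = r) :
    Function.Injective (enu hM hr c) := by
  rw [enu, dif_pos h]
  intro a b hab
  exact ((Finset.image c Finset.univ).orderIsoOfFin h).injective (Subtype.ext hab)

lemma enu_surj {M r : ℕ} (hM : 0 < M) (hr : 0 < r) {c : ι → Fin M}
    (h : (Finset.image c Finset.univ).card = r) {x : Fin M}
    (hx : x ∈ Finset.image c Finset.univ) : ∃ m, enu hM hr c m = x := by
  rw [enu, dif_pos h]
  exact ⟨((Finset.image c Finset.univ).orderIsoOfFin h).symm ⟨x, hx⟩, by simp⟩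

/-- CARD1: tuples with range of size `r` number at most `r^|ι| * M^r`. -/
lemma card_filter_range_eq {M r : ℕ} (hM : 0 < M) (hr : 0 < r) :
    ((univ : Finset (ι → Fin M)).filter fun c => (Finset.image c Finset.univ).card = r).card
      ≤ r ^ (Fintype.card ι) * M ^ r := by
  classical
  have hinj : Set.InjOn (fun c => (pat hr c, enu hM hr c))
      (((univ : Finset (ι → Fin M)).filter fun c => (Finset.image c Finset.univ).card = r) :
        Set (ι → Fin M)) := by
    intro c hc c' hc' heq
    rw [Finset.mem_coe, Finset.mem_filter] at hc hc'
    replace hc := hc.2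
    replace hc' := hc'.2
    have h1 : pat hr c = pat hr c' := congrArg Prod.fst heq
    have h2 : enu hM hr c = enu hM hr c' := congrArg Prod.snd heq
    funext i
    rw [← enu_pat hM hr hc i, h1, h2, enu_pat hM hr hc' i]
  calc _ ≤ (univ : Finset ((ι → Fin r) × (Fin r → Fin M))).card :=
        Finset.card_le_card_of_injOn _ (fun c _ => Finset.mem_univ _) hinj
    _ = r ^ (Fintype.card ι) * M ^ r := by
        rw [Finset.card_univ, Fintype.card_prod, Fintype.card_fun, Fintype.card_fun]
        simp [Fintype.card_fin]

lemma card_filter_eval_eq {M r : ℕ} (m0 : Fin r) (y : Fin M) :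
    ((univ : Finset (Fin r → Fin M)).filter fun g => g m0 = y).card = M ^ (r - 1) := by
  classical
  have e : {g : Fin r → Fin M // g m0 = y} ≃ ({j : Fin r // ¬ j = m0} → Fin M) :=
    { toFun := fun g j => g.1 j.1
      invFun := fun e => ⟨fun m => if h : m = m0 then y else e ⟨m, h⟩, by simp⟩
      left_inv := fun g => by
        ext m
        by_cases h : m = m0
        · subst h; simp [g.2]
        · simp [h]
      right_inv := fun e => by ext j; simp [j.2] }
  calc ((univ : Finset (Fin r → Fin M)).filter fun g => g m0 = y).card
      = Fintype.card {g : Fin r → Fin M // g m0 = y} := (Fintype.card_subtype _).symm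
    _ = Fintype.card ({j : Fin r // ¬ j = m0} → Fin M) := Fintype.card_congr e
    _ = M ^ (r - 1) := by
        rw [Fintype.card_fun, Fintype.card_subtype_compl, Fintype.card_subtype_eq,
          Fintype.card_fin, Fintype.card_fin]

def vsum (w : ι → ℤ) {r : ℕ} (π : ι → Fin r) (m : Fin r) : ℤ :=
  ∑ i ∈ univ.filter (fun i => π i = m), w i

noncomputable def mzero (w : ι → ℤ) {r : ℕ} (hr : 0 < r) (π : ι → Fin r) : Fin r :=
  if hv : ∃ m, vsum w π m ≠ 0 then hv.choose else ⟨0, hr⟩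

lemma mzero_spec (w : ι → ℤ) {r : ℕ} (hr : 0 < r) {π : ι → Fin r}
    (hv : ∃ m, vsum w π m ≠ 0) : vsum w π (mzero w hr π) ≠ 0 := by
  rw [mzero, dif_pos hv]; exact hv.choose_spec

/-- CARD2: tuples with range of size `r` satisfying a "nondegenerate" linear relation
number at most `r^|ι| * M^(r-1)`. -/
lemma card_filter_lin {M r : ℕ} (hM : 0 < M) (hr : 0 < r) (w : ι → ℤ) :
    ((univ : Finset (ι → Fin M)).filter fun c =>
        ((∑ i, w i * ((c i : ℕ) : ℤ)) = 0 ∧ (Finset.image c Finset.univ).card = r) ∧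
        ∃ x : Fin M, (∑ i ∈ univ.filter fun i => c i = x, w i) ≠ 0).card
      ≤ r ^ (Fintype.card ι) * M ^ (r - 1) := by
  classical
  set S := ((univ : Finset (ι → Fin M)).filter fun c =>
        ((∑ i, w i * ((c i : ℕ) : ℤ)) = 0 ∧ (Finset.image c Finset.univ).card = r) ∧
        ∃ x : Fin M, (∑ i ∈ univ.filter fun i => c i = x, w i) ≠ 0) with hS
  -- main facts for members of S
  have main : ∀ c ∈ S, (∃ m, vsum w (pat hr c) m ≠ 0) ∧
      (∑ m, vsum w (pat hr c) m * ((enu hM hr c m : ℕ) : ℤ)) = 0 := by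
    intro c hc
    rw [hS, mem_filter] at hc
    obtain ⟨-, ⟨hlin, hcard⟩, x, hx⟩ := hc
    have hep : ∀ i, enu hM hr c (pat hr c i) = c i := enu_pat hM hr hcard
    have hfib : ∀ m, univ.filter (fun i => pat hr c i = m)
        = univ.filter (fun i => c i = enu hM hr c m) := by
      intro m
      ext i
      simp only [mem_filter, mem_univ, true_and]
      constructor
      · rintro rfl; exact (hep i).symm
      · intro h; exact enu_inj hM hr hcard (by rw [hep, h])
    constructor
    · have hxmem : x ∈ Finset.image c Finset.univ := by
        by_contra hx'
        apply hx
        rw [Finset.filter_false_of_mem, Finset.sum_empty]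
        intro i _ hxi
        exact hx' (hxi ▸ Finset.mem_image_of_mem c (Finset.mem_univ i))
      obtain ⟨m, hm⟩ := enu_surj hM hr hcard hxmem
      refine ⟨m, ?_⟩
      rw [vsum, hfib, hm]
      exact hx
    · have := Finset.sum_fiberwise (Finset.univ : Finset ι) (pat hr c)
        (fun i => w i * ((c i : ℕ) : ℤ))
      rw [← hlin, ← this]
      refine Finset.sum_congr rfl fun m _ => ?_
      rw [vsum, Finset.sum_mul]
      refine Finset.sum_congr rfl fun i hi => ?_
      rw [mem_filter] at hi
      rw [← hi.2, hep i]
  -- the injection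
  set T := (univ : Finset (ι → Fin r)).sigma
      (fun π => (univ : Finset (Fin r → Fin M)).filter fun g => g (mzero w hr π) = ⟨0, hM⟩)
    with hT
  have hTcard : T.card = r ^ (Fintype.card ι) * M ^ (r - 1) := by
    rw [hT, Finset.card_sigma]
    rw [Finset.sum_congr rfl (fun π _ => card_filter_eval_eq (mzero w hr π) ⟨0, hM⟩)]
    rw [Finset.sum_const, Finset.card_univ, Fintype.card_fun, Fintype.card_fin, smul_eq_mul]
  have hinj : Set.InjOn (fun c => (⟨pat hr c,
      fun m => if m = mzero w hr (pat hr c) then ⟨0, hM⟩ else enu hM hr c m⟩ :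
        Σ _ : ι → Fin r, Fin r → Fin M)) ↑S := by
    intro c hc c' hc' heq
    rw [Finset.mem_coe] at hc hc'
    have hmemc := main c hc
    have hmemc' := main c' hc'
    rw [hS, mem_filter] at hc hc'
    have hcard : (Finset.image c Finset.univ).card = r := hc.2.1.2
    have hcard' : (Finset.image c' Finset.univ).card = r := hc'.2.1.2
    have h1 : pat hr c = pat hr c' := congrArg Sigma.fst heq
    have h2 : (fun m => if m = mzero w hr (pat hr c) then (⟨0, hM⟩ : Fin M) else enu hM hr c m)
        = fun m => if m = mzero w hr (pat hr c') then ⟨0, hM⟩ else enu hM hr c' m := by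
      have := congrArg (fun q : (Σ _ : ι → Fin r, Fin r → Fin M) => q.snd) heq
      exact this
    set π := pat hr c with hπ
    set m₀ := mzero w hr π with hm₀
    have hoff : ∀ m, m ≠ m₀ → enu hM hr c m = enu hM hr c' m := by
      intro m hm
      have := congrFun h2 m
      rwa [if_neg hm, ← h1, if_neg hm] at this
    have heqm0 : enu hM hr c m₀ = enu hM hr c' m₀ := by
      have hv := hmemc.1
      have hvne : vsum w π m₀ ≠ 0 := mzero_spec w hr hv
      have heq1 := hmemc.2
      have heq2 := hmemc'.2
      rw [← h1] at heq2
      have hdiff : (∑ m, vsum w π m * (((enu hM hr c m : ℕ) : ℤ) - ((enu hM hr c' m : ℕ) : ℤ))) = 0 := by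
        simp only [mul_sub]
        rw [Finset.sum_sub_distrib, heq1, heq2, sub_zero]
      have hsingle : (∑ m, vsum w π m * (((enu hM hr c m : ℕ) : ℤ) - ((enu hM hr c' m : ℕ) : ℤ)))
          = vsum w π m₀ * (((enu hM hr c m₀ : ℕ) : ℤ) - ((enu hM hr c' m₀ : ℕ) : ℤ)) := by
        refine Finset.sum_eq_single_of_mem m₀ (Finset.mem_univ _) ?_
        intro m _ hm
        rw [hoff m hm, sub_self, mul_zero]
      rw [hsingle] at hdiff
      have := (mul_eq_zero.mp hdiff).resolve_left hvne
      have hval : ((enu hM hr c m₀ : ℕ) : ℤ) = ((enu hM hr c' m₀ : ℕ) : ℤ) := by linarith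
      exact Fin.ext (by exact_mod_cast hval)
    have henu : enu hM hr c = enu hM hr c' := by
      funext m
      by_cases hm : m = m₀
      · rw [hm]; exact heqm0
      · exact hoff m hm
    funext i
    rw [← enu_pat hM hr hcard i, henu, ← hπ, h1, enu_pat hM hr hcard' i]
  calc S.card ≤ T.card := by
        refine Finset.card_le_card_of_injOn _ (fun c hc => ?_) hinj
        rw [hT, Finset.mem_coe, Finset.mem_sigma]
        exact ⟨Finset.mem_univ _, by rw [Finset.mem_filter]; exact ⟨Finset.mem_univ _, if_pos rfl⟩⟩
    _ = _ := hTcard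


variable (h N : ℕ) (u : Fin h → ℤ)

def Lsum (a : Fin h → Fin (N + 1)) : ℤ := ∑ i, u i * ((a i : ℕ) : ℤ)

def G : Finset (Equiv.Perm (Fin h)) := univ.filter fun σ => ∀ i, u (σ i) = u i

lemma thetaL_eq : thetaL h u = (G h u).card := by
  rw [thetaL, Nat.card_eq_fintype_card, Fintype.card_subtype, G]

lemma one_le_G_card : 1 ≤ (G h u).card := by
  refine Finset.card_pos.mpr ⟨1, ?_⟩
  simp [G]

lemma inv_mem_G {σ : Equiv.Perm (Fin h)} (hσ : σ ∈ G h u) : σ⁻¹ ∈ G h u := by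
  simp only [G, mem_filter, mem_univ, true_and] at hσ ⊢
  intro i
  conv_rhs => rw [← show σ (σ⁻¹ i) = i from σ.apply_symm_apply i]
  rw [hσ (σ⁻¹ i)]

lemma Lsum_comp_perm (a : Fin h → Fin (N + 1)) {σ : Equiv.Perm (Fin h)} (hσ : σ ∈ G h u) :
    Lsum h N u (a ∘ σ) = Lsum h N u a := by
  simp only [G, mem_filter, mem_univ, true_and] at hσ
  rw [Lsum, Lsum]
  rw [← Equiv.sum_comp σ (fun j => u j * ((a j : ℕ) : ℤ))]
  exact Finset.sum_congr rfl fun i _ => by rw [Function.comp_apply, hσ i]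

/-- tuples all of whose entries are in `A`. -/
def TT (ω : Fin (N + 1) → Bool) : Finset (Fin h → Fin (N + 1)) :=
  univ.filter fun a => ∀ i, ω (a i) = true

def Iset : Finset (Fin h → Fin (N + 1)) := univ.filter fun a => Function.Injective a
def Nset : Finset (Fin h → Fin (N + 1)) := univ.filter fun a => ¬ Function.Injective a

def rng1 (a : Fin h → Fin (N + 1)) : Finset (Fin (N + 1)) := image a univ
def rng2 (q : (Fin h → Fin (N + 1)) × (Fin h → Fin (N + 1))) : Finset (Fin (N + 1)) :=
  image q.1 univ ∪ image q.2 univ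

def Dset (ω : Fin (N + 1) → Bool) : Finset (Fin h → Fin (N + 1)) :=
  (Iset h N).filter fun a => ∀ x ∈ rng1 h N a, ω x = true
def Rset (ω : Fin (N + 1) → Bool) : Finset (Fin h → Fin (N + 1)) :=
  (Nset h N).filter fun a => ∀ x ∈ rng1 h N a, ω x = true

def CPairs : Finset ((Fin h → Fin (N + 1)) × (Fin h → Fin (N + 1))) :=
  univ.filter fun q => Function.Injective q.1 ∧ Function.Injective q.2 ∧
    Lsum h N u q.1 = Lsum h N u q.2 ∧ ¬ (∃ σ ∈ G h u, q.2 = q.1 ∘ σ)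

def Cset (ω : Fin (N + 1) → Bool) :
    Finset ((Fin h → Fin (N + 1)) × (Fin h → Fin (N + 1))) :=
  (CPairs h N u).filter fun q => ∀ x ∈ rng2 h N q, ω x = true

lemma mem_rng1_iff (a : Fin h → Fin (N + 1)) (ω : Fin (N + 1) → Bool) :
    (∀ x ∈ rng1 h N a, ω x = true) ↔ ∀ i, ω (a i) = true := by
  simp [rng1]

lemma Dset_eq (ω : Fin (N + 1) → Bool) :
    Dset h N ω = (TT h N ω).filter fun a => Function.Injective a := by
  ext a
  simp only [Dset, TT, Iset, mem_filter, mem_univ, true_and, mem_rng1_iff]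
  tauto

lemma Rset_eq (ω : Fin (N + 1) → Bool) :
    Rset h N ω = (TT h N ω).filter fun a => ¬ Function.Injective a := by
  ext a
  simp only [Rset, TT, Nset, mem_filter, mem_univ, true_and, mem_rng1_iff]
  tauto

def Yval (ω : Fin (N + 1) → Bool) : Finset ℤ := (Dset h N ω).image (Lsum h N u)

/-- L1 fiber bound: `θ * |Y| ≤ |D|`. -/
lemma theta_mul_Y_le_D (ω : Fin (N + 1) → Bool) :
    (G h u).card * (Yval h N u ω).card ≤ (Dset h N ω).card := by
  classical
  apply Finset.mul_card_image_le_card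
  intro v hv
  obtain ⟨a, ha, hav⟩ := Finset.mem_image.mp hv
  refine Finset.card_le_card_of_injOn (fun σ => a ∘ σ) ?_ ?_
  · intro σ hσ
    rw [Finset.mem_coe, Finset.mem_filter]
    rw [Dset_eq] at ha ⊢
    rw [Finset.mem_filter] at ha
    obtain ⟨haT, hainj⟩ := ha
    rw [TT, Finset.mem_filter] at haT
    constructor
    · rw [Finset.mem_filter]
      refine ⟨?_, hainj.comp σ.injective⟩
      rw [TT, Finset.mem_filter]
      exact ⟨Finset.mem_univ _, fun i => haT.2 (σ i)⟩
    · rw [Lsum_comp_perm h N u a hσ, hav]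
  · intro σ _ σ' _ hσσ'
    rw [Dset_eq, Finset.mem_filter] at ha
    exact Equiv.ext fun i => ha.2 (congrFun hσσ' i)

lemma sum_card_fiber_le {α β : Type*} [DecidableEq α] [DecidableEq β] (s : Finset α)
    (t : Finset β) (f : α → β) :
    ∑ v ∈ t, (s.filter fun a => f a = v).card ≤ s.card := by
  classical
  rw [← Finset.card_biUnion]
  · exact Finset.card_le_card (Finset.biUnion_subset.mpr fun v _ => Finset.filter_subset _ _)
  · intro v _ v' _ hvv'
    refine Finset.disjoint_left.mpr ?_
    intro a ha ha'
    rw [Finset.mem_filter] at ha ha'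
    exact hvv' (ha.2.symm.trans ha'.2)

/-- L2: `|D| ≤ θ * |Y| + |C|`. -/
lemma D_le_theta_Y_add_C (ω : Fin (N + 1) → Bool) :
    (Dset h N ω).card ≤ (G h u).card * (Yval h N u ω).card + (Cset h N u ω).card := by
  classical
  rw [Finset.card_eq_sum_card_fiberwise (f := Lsum h N u) (t := Yval h N u ω)
    (fun a ha => Finset.mem_image_of_mem _ ha)]
  have key : ∀ v ∈ Yval h N u ω,
      ((Dset h N ω).filter fun a => Lsum h N u a = v).card
      ≤ (G h u).card + ((Cset h N u ω).filter fun q => Lsum h N u q.1 = v).card := by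
    intro v hv
    obtain ⟨a0, ha0, ha0v⟩ := Finset.mem_image.mp hv
    have hsplit : ((Dset h N ω).filter fun a => Lsum h N u a = v)
        ⊆ ((G h u).image fun σ : Equiv.Perm (Fin h) => a0 ∘ ⇑σ) ∪
          (((Dset h N ω).filter fun a => Lsum h N u a = v).filter
            fun b => ¬ ∃ σ ∈ G h u, b = a0 ∘ σ) := by
      intro b hb
      by_cases horb : ∃ σ ∈ G h u, b = a0 ∘ σ
      · obtain ⟨σ, hσ, rfl⟩ := horb
        exact Finset.mem_union_left _ (Finset.mem_image_of_mem _ hσ)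
      · exact Finset.mem_union_right _ (Finset.mem_filter.mpr ⟨hb, horb⟩)
    calc ((Dset h N ω).filter fun a => Lsum h N u a = v).card
        ≤ ((G h u).image fun σ : Equiv.Perm (Fin h) => a0 ∘ ⇑σ).card +
          (((Dset h N ω).filter fun a => Lsum h N u a = v).filter
            fun b => ¬ ∃ σ ∈ G h u, b = a0 ∘ σ).card :=
          le_trans (Finset.card_le_card hsplit) (Finset.card_union_le _ _)
      _ ≤ (G h u).card + ((Cset h N u ω).filter fun q => Lsum h N u q.1 = v).card := by
          refine Nat.add_le_add (Finset.card_image_le) ?_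
          refine Finset.card_le_card_of_injOn (fun b => (a0, b)) ?_ ?_
          · intro b hb
            rw [Finset.mem_coe, Finset.mem_filter] at hb
            obtain ⟨hb1, hb2⟩ := hb
            rw [Finset.mem_filter] at hb1
            obtain ⟨hbD, hbv⟩ := hb1
            rw [Dset_eq, Finset.mem_filter, TT, Finset.mem_filter] at hbD ha0
            rw [Finset.mem_coe, Finset.mem_filter]
            constructor
            · rw [Cset, Finset.mem_filter]
              constructor
              · rw [CPairs, Finset.mem_filter]
                refine ⟨Finset.mem_univ _, ha0.2, hbD.2, by rw [ha0v, hbv], hb2⟩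
              · intro x hx
                rw [rng2, Finset.mem_union] at hx
                rcases hx with hx | hx <;> obtain ⟨i, -, rfl⟩ := Finset.mem_image.mp hx
                · exact ha0.1.2 i
                · exact hbD.1.2 i
            · exact ha0v
          · intro b _ b' _ hbb'
            exact congrArg Prod.snd hbb'
  calc ∑ v ∈ Yval h N u ω, ((Dset h N ω).filter fun a => Lsum h N u a = v).card
      ≤ ∑ v ∈ Yval h N u ω, ((G h u).card +
          ((Cset h N u ω).filter fun q => Lsum h N u q.1 = v).card) :=
        Finset.sum_le_sum key
    _ = (G h u).card * (Yval h N u ω).card +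
        ∑ v ∈ Yval h N u ω, ((Cset h N u ω).filter fun q => Lsum h N u q.1 = v).card := by
        rw [Finset.sum_add_distrib, Finset.sum_const, smul_eq_mul, mul_comm]
    _ ≤ _ := by
        exact Nat.add_le_add_left (sum_card_fiber_le _ _ _) _

/-- L3: `|LA| ≤ |Y| + |R|` and `|Y| ≤ |LA|`. -/
lemma LA_le_Y_add_R (ω : Fin (N + 1) → Bool) :
    (LA h N u ω).card ≤ (Yval h N u ω).card + (Rset h N ω).card := by
  classical
  have hLA : LA h N u ω = (TT h N ω).image (Lsum h N u) := rfl
  have hT : TT h N ω = ((TT h N ω).filter fun a => Function.Injective a) ∪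
      ((TT h N ω).filter fun a => ¬ Function.Injective a) :=
    (Finset.filter_union_filter_not_eq _ _).symm
  calc (LA h N u ω).card
      = (((TT h N ω).filter fun a => Function.Injective a).image (Lsum h N u) ∪
         ((TT h N ω).filter fun a => ¬ Function.Injective a).image (Lsum h N u)).card := by
        rw [hLA]; rw [← Finset.image_union, ← hT]
    _ ≤ (((TT h N ω).filter fun a => Function.Injective a).image (Lsum h N u)).card +
        (((TT h N ω).filter fun a => ¬ Function.Injective a).image (Lsum h N u)).card :=
        Finset.card_union_le _ _
    _ ≤ (Yval h N u ω).card + (Rset h N ω).card := by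
        refine Nat.add_le_add ?_ ?_
        · rw [Yval, Dset_eq]
        · rw [Rset_eq]; exact Finset.card_image_le

lemma Y_le_LA (ω : Fin (N + 1) → Bool) :
    (Yval h N u ω).card ≤ (LA h N u ω).card := by
  classical
  apply Finset.card_le_card
  rw [Yval, Dset_eq]
  exact Finset.image_subset_image (Finset.filter_subset _ _)

/-- main deterministic sandwich -/
lemma theta_LA_le (ω : Fin (N + 1) → Bool) :
    (G h u).card * (LA h N u ω).card
      ≤ (Dset h N ω).card + (G h u).card * (Rset h N ω).card := by
  calc (G h u).card * (LA h N u ω).card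
      ≤ (G h u).card * ((Yval h N u ω).card + (Rset h N ω).card) :=
        Nat.mul_le_mul_left _ (LA_le_Y_add_R h N u ω)
    _ = (G h u).card * (Yval h N u ω).card + (G h u).card * (Rset h N ω).card := by ring
    _ ≤ _ := Nat.add_le_add_right (theta_mul_Y_le_D h N u ω) _

lemma D_le_theta_LA (ω : Fin (N + 1) → Bool) :
    (Dset h N ω).card ≤ (G h u).card * (LA h N u ω).card + (Cset h N u ω).card := by
  calc (Dset h N ω).card
      ≤ (G h u).card * (Yval h N u ω).card + (Cset h N u ω).card := D_le_theta_Y_add_C h N u ω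
    _ ≤ _ := Nat.add_le_add_right
        (Nat.mul_le_mul_left _ (Y_le_LA h N u ω)) _

/-- The orbit/nondegeneracy lemma for collision pairs. -/
lemma cpairs_nondeg (hu : ∀ i, u i ≠ 0) {q : (Fin h → Fin (N + 1)) × (Fin h → Fin (N + 1))}
    (hq : q ∈ CPairs h N u) :
    ∃ x : Fin (N + 1),
      (∑ i ∈ univ.filter (fun i => Sum.elim q.1 q.2 i = x), Sum.elim u (fun j => -u j) i) ≠ 0 := by
  classical
  rw [CPairs, Finset.mem_filter] at hq
  obtain ⟨-, hinj1, hinj2, hLeq, hnorb⟩ := hq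
  by_contra hall
  push_neg at hall
  -- compute the class sums
  have hclass : ∀ x : Fin (N + 1),
      (∑ j : Fin h, if q.1 j = x then u j else 0) = ∑ j : Fin h, if q.2 j = x then u j else 0 := by
    intro x
    have := hall x
    rw [Finset.sum_filter, Fintype.sum_sum_type] at this
    simp only [Sum.elim_inl, Sum.elim_inr] at this
    have hneg : (∑ j : Fin h, if q.2 j = x then -u j else 0)
        = -∑ j : Fin h, if q.2 j = x then u j else 0 := by
      rw [← Finset.sum_neg_distrib]
      exact Finset.sum_congr rfl fun j _ => by split <;> simp
    have h2 : ((∑ j : Fin h, if q.1 j = x then u j else 0) +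
        ∑ j : Fin h, if q.2 j = x then -u j else 0) = 0 := by convert this <;> split_ifs with hc <;> simp [hc]
    rw [hneg] at h2
    linarith
  -- for each i, there is a unique j with q.2 j = q.1 i, and u j = u i
  have hex : ∀ i : Fin h, ∃ j : Fin h, q.2 j = q.1 i ∧ u j = u i := by
    intro i
    have h1 : (∑ j : Fin h, if q.1 j = q.1 i then u j else 0) = u i := by
      rw [Finset.sum_eq_single i]
      · rw [if_pos rfl]
      · intro j _ hj
        rw [if_neg (fun hc => hj (hinj1 hc))]
      · intro hi; exact absurd (Finset.mem_univ i) hi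
    have h2 := (hclass (q.1 i)).symm.trans h1
    by_cases hex2 : ∃ j, q.2 j = q.1 i
    · obtain ⟨j, hj⟩ := hex2
      refine ⟨j, hj, ?_⟩
      rw [Finset.sum_eq_single j] at h2
      · rwa [if_pos hj] at h2
      · intro j' _ hj'
        rw [if_neg (fun hc => hj' (hinj2 (hc.trans hj.symm)))]
      · intro hj'; exact absurd (Finset.mem_univ j) hj'
    · push_neg at hex2
      rw [Finset.sum_eq_zero (fun j _ => if_neg (hex2 j))] at h2
      exact absurd h2.symm (hu i)
  choose f hf1 hf2 using hex
  have hfinj : Function.Injective f := by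
    intro i i' hii'
    apply hinj1
    rw [← hf1 i, ← hf1 i', hii']
  let σ : Equiv.Perm (Fin h) := Equiv.ofBijective f (Finite.injective_iff_bijective.mp hfinj)
  have hσapp : ∀ i, σ i = f i := fun i => rfl
  have hσG : σ ∈ G h u := by
    simp only [G, Finset.mem_filter, Finset.mem_univ, true_and]
    intro i
    rw [hσapp, hf2]
  apply hnorb
  refine ⟨σ⁻¹, inv_mem_G h u hσG, ?_⟩
  funext i
  have : q.2 (σ (σ⁻¹ i)) = q.1 (σ⁻¹ i) := by rw [hσapp, hf1]
  rw [show σ (σ⁻¹ i) = i from σ.apply_symm_apply i] at this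
  exact this

/-- linear relation for collision pairs -/
lemma cpairs_lin {q : (Fin h → Fin (N + 1)) × (Fin h → Fin (N + 1))}
    (hq : q ∈ CPairs h N u) :
    (∑ i : Fin h ⊕ Fin h, Sum.elim u (fun j => -u j) i *
      (((Sum.elim q.1 q.2 i : Fin (N + 1)) : ℕ) : ℤ)) = 0 := by
  rw [CPairs, Finset.mem_filter] at hq
  obtain ⟨-, -, -, hLeq, -⟩ := hq
  rw [Fintype.sum_sum_type]
  simp only [Sum.elim_inl, Sum.elim_inr, neg_mul]
  have hLeq' : (∑ i, u i * ((q.1 i : ℕ) : ℤ)) = ∑ i, u i * ((q.2 i : ℕ) : ℤ) := hLeq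
  rw [Finset.sum_neg_distrib, hLeq']
  ring

lemma image_sum_elim (a b : Fin h → Fin (N + 1)) :
    image (Sum.elim a b) univ = rng2 h N (a, b) := by
  ext x
  simp only [rng2, Finset.mem_union, Finset.mem_image, Finset.mem_univ, true_and]
  constructor
  · rintro ⟨i, rfl⟩
    cases i with
    | inl i => exact Or.inl ⟨i, by simp⟩
    | inr i => exact Or.inr ⟨i, by simp⟩
  · rintro (⟨i, -, rfl⟩ | ⟨i, -, rfl⟩)
    · exact ⟨Sum.inl i, rfl⟩
    · exact ⟨Sum.inr i, rfl⟩


section Expectations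
variable {h N : ℕ} {p : ℝ} (u : Fin h → ℤ)

lemma ED_eq (hp0 : 0 ≤ p) :
    ∑ ω : Fin (N + 1) → Bool, wgt p ω * ((Dset h N ω).card : ℝ)
      = ((Iset h N).card : ℝ) * p ^ h := by
  simp only [Dset]
  rw [sum_wgt_card hp0 (Iset h N) (rng1 h N)]
  have hc : ∀ a ∈ Iset h N, p ^ (rng1 h N a).card = p ^ h := by
    intro a ha
    rw [Iset, Finset.mem_filter] at ha
    rw [rng1, Finset.card_image_of_injective _ ha.2, Finset.card_univ, Fintype.card_fin]
  rw [Finset.sum_congr rfl hc, Finset.sum_const, nsmul_eq_mul]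

lemma ER_eq (hp0 : 0 ≤ p) :
    ∑ ω : Fin (N + 1) → Bool, wgt p ω * ((Rset h N ω).card : ℝ)
      = ∑ a ∈ Nset h N, p ^ (rng1 h N a).card := by
  simp only [Rset]
  exact sum_wgt_card hp0 (Nset h N) (rng1 h N)

lemma EC_eq (hp0 : 0 ≤ p) :
    ∑ ω : Fin (N + 1) → Bool, wgt p ω * ((Cset h N u ω).card : ℝ)
      = ∑ q ∈ CPairs h N u, p ^ (rng2 h N q).card := by
  simp only [Cset]
  exact sum_wgt_card hp0 (CPairs h N u) (rng2 h N)

lemma ED2_eq (hp0 : 0 ≤ p) :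
    ∑ ω : Fin (N + 1) → Bool, wgt p ω * (((Dset h N ω).card : ℝ)) ^ 2
      = ∑ q ∈ (Iset h N) ×ˢ (Iset h N), p ^ (rng2 h N q).card := by
  have hsq : ∀ ω : Fin (N + 1) → Bool, (((Dset h N ω).card : ℝ)) ^ 2
      = (((((Iset h N) ×ˢ (Iset h N)).filter fun q => ∀ x ∈ rng2 h N q, ω x = true)).card : ℝ) := by
    intro ω
    have h1 : (((Iset h N) ×ˢ (Iset h N)).filter fun q => ∀ x ∈ rng2 h N q, ω x = true)
        = (Dset h N ω) ×ˢ (Dset h N ω) := by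
      rw [Dset, ← Finset.filter_product]
      apply Finset.filter_congr
      intro q _
      simp only [rng2, rng1, Finset.forall_mem_union]
    rw [h1, Finset.card_product]
    push_cast
    ring
  simp_rw [hsq]
  exact sum_wgt_card hp0 _ (rng2 h N)

lemma sum_pow_card_le {γ : Type*} [DecidableEq γ] (F : Finset γ)
    (rg : γ → Finset (Fin (N + 1))) (m : ℕ) (hcard : ∀ q ∈ F, (rg q).card < m + 1)
    (B : ℕ → ℕ) (hB : ∀ k, ((F.filter fun q => (rg q).card = k).card) ≤ B k)
    (hp0 : 0 ≤ p) :
    ∑ q ∈ F, p ^ (rg q).card ≤ ∑ k ∈ Finset.range (m + 1), (B k : ℝ) * p ^ k := by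
  rw [← Finset.sum_fiberwise_of_maps_to (g := fun q => (rg q).card)
    (fun q hq => Finset.mem_range.mpr (hcard q hq))]
  refine Finset.sum_le_sum fun k _ => ?_
  have hc : ∀ q ∈ F.filter (fun q => (rg q).card = k), p ^ (rg q).card = p ^ k := by
    intro q hq; rw [(Finset.mem_filter.mp hq).2]
  rw [Finset.sum_congr rfl hc, Finset.sum_const, nsmul_eq_mul]
  exact mul_le_mul_of_nonneg_right (by exact_mod_cast hB k) (pow_nonneg hp0 k)

lemma rng2_nonempty (hh : 0 < h) (q : (Fin h → Fin (N + 1)) × (Fin h → Fin (N + 1))) :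
    (rng2 h N q).Nonempty := by
  have : Nonempty (Fin h) := ⟨⟨0, hh⟩⟩
  rw [rng2]
  exact Finset.Nonempty.inl (Finset.univ_nonempty.image _)

lemma rng2_card_le (q : (Fin h → Fin (N + 1)) × (Fin h → Fin (N + 1))) :
    (rng2 h N q).card ≤ h + h := by
  refine le_trans (Finset.card_union_le _ _) (Nat.add_le_add ?_ ?_) <;>
    exact le_trans Finset.card_image_le (by rw [Finset.card_univ, Fintype.card_fin])

lemma sum_elim_injOn (F : Finset ((Fin h → Fin (N + 1)) × (Fin h → Fin (N + 1)))) :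
    Set.InjOn (fun q : (Fin h → Fin (N + 1)) × (Fin h → Fin (N + 1)) => Sum.elim q.1 q.2)
      (F : Set _) := by
  intro q _ q' _ heq
  exact Prod.ext (funext fun i => congrFun heq (Sum.inl i))
    (funext fun i => congrFun heq (Sum.inr i))

lemma card_pairs_rng2_le (hh : 0 < h)
    (F : Finset ((Fin h → Fin (N + 1)) × (Fin h → Fin (N + 1)))) (k : ℕ) :
    ((F.filter fun q => (rng2 h N q).card = k).card) ≤ k ^ (h + h) * (N + 1) ^ k := by
  rcases Nat.eq_zero_or_pos k with rfl | hk
  · have he : (F.filter fun q => (rng2 h N q).card = 0) = ∅ := by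
      rw [Finset.filter_eq_empty_iff]
      intro q _ hc
      exact absurd (Finset.card_eq_zero.mp hc) (rng2_nonempty hh q).ne_empty
    rw [he, Finset.card_empty]
    exact Nat.zero_le _
  · calc ((F.filter fun q => (rng2 h N q).card = k).card)
        ≤ ((univ : Finset ((Fin h ⊕ Fin h) → Fin (N + 1))).filter
            (fun c => (Finset.image c Finset.univ).card = k)).card := by
          refine Finset.card_le_card_of_injOn
            (fun q : (Fin h → Fin (N + 1)) × (Fin h → Fin (N + 1)) => Sum.elim q.1 q.2) ?_ ?_
          · intro q hq
            rw [Finset.mem_coe, Finset.mem_filter] at hq ⊢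
            refine ⟨Finset.mem_univ _, ?_⟩
            rw [image_sum_elim]
            exact hq.2
          · exact (sum_elim_injOn F).mono (Finset.coe_subset.mpr (Finset.filter_subset _ _))
      _ ≤ k ^ (h + h) * (N + 1) ^ k := by
          have hcr := card_filter_range_eq (ι := Fin h ⊕ Fin h) (M := N + 1) (Nat.succ_pos N) hk
          rwa [Fintype.card_sum, Fintype.card_fin] at hcr

lemma card_cpairs_rng2_le (hh : 0 < h) (hu : ∀ i, u i ≠ 0) (k : ℕ) :
    (((CPairs h N u).filter fun q => (rng2 h N q).card = k).card)
      ≤ k ^ (h + h) * (N + 1) ^ (k - 1) := by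
  rcases Nat.eq_zero_or_pos k with rfl | hk
  · have he : ((CPairs h N u).filter fun q => (rng2 h N q).card = 0) = ∅ := by
      rw [Finset.filter_eq_empty_iff]
      intro q _ hc
      exact absurd (Finset.card_eq_zero.mp hc) (rng2_nonempty hh q).ne_empty
    rw [he, Finset.card_empty]
    exact Nat.zero_le _
  · calc (((CPairs h N u).filter fun q => (rng2 h N q).card = k).card)
        ≤ ((univ : Finset ((Fin h ⊕ Fin h) → Fin (N + 1))).filter
            (fun c : (Fin h ⊕ Fin h) → Fin (N + 1) =>
              ((∑ i, (Sum.elim u (fun j => -u j)) i * (((c i : Fin (N + 1)) : ℕ) : ℤ)) = 0 ∧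
              (Finset.image c Finset.univ).card = k) ∧
              ∃ x : Fin (N + 1),
                (∑ i ∈ univ.filter fun i => c i = x, (Sum.elim u (fun j => -u j)) i) ≠ 0)).card := by
          refine Finset.card_le_card_of_injOn
            (fun q : (Fin h → Fin (N + 1)) × (Fin h → Fin (N + 1)) => Sum.elim q.1 q.2) ?_ ?_
          · intro q hq
            rw [Finset.mem_coe, Finset.mem_filter] at hq ⊢
            refine ⟨Finset.mem_univ _, ⟨cpairs_lin h N u hq.1, ?_⟩, cpairs_nondeg h N u hu hq.1⟩
            rw [image_sum_elim]
            exact hq.2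
          · exact (sum_elim_injOn _).mono (Finset.coe_subset.mpr (Finset.filter_subset _ _))
      _ ≤ k ^ (h + h) * (N + 1) ^ (k - 1) := by
          have hcr := card_filter_lin (ι := Fin h ⊕ Fin h) (M := N + 1) (Nat.succ_pos N) hk
            (Sum.elim u (fun j => -u j))
          rwa [Fintype.card_sum, Fintype.card_fin] at hcr

lemma noninj_rng1_lt (hh : 0 < h) {a : Fin h → Fin (N + 1)} (ha : a ∈ Nset h N) :
    (rng1 h N a).card < h := by
  rw [Nset, Finset.mem_filter] at ha
  refine lt_of_le_of_ne ?_ ?_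
  · rw [rng1]
    exact le_trans Finset.card_image_le (by rw [Finset.card_univ, Fintype.card_fin])
  · intro hc
    apply ha.2
    rw [rng1] at hc
    have hinj : Set.InjOn a ↑(univ : Finset (Fin h)) := Finset.card_image_iff.mp
      (by rw [hc, Finset.card_univ, Fintype.card_fin])
    rw [Finset.coe_univ] at hinj
    exact Set.injOn_univ.mp hinj

lemma card_nset_rng1_le (hh : 0 < h) (k : ℕ) :
    (((Nset h N).filter fun a => (rng1 h N a).card = k).card) ≤ k ^ h * (N + 1) ^ k := by
  rcases Nat.eq_zero_or_pos k with rfl | hk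
  · have he : ((Nset h N).filter fun a => (rng1 h N a).card = 0) = ∅ := by
      rw [Finset.filter_eq_empty_iff]
      intro a _ hc
      have : Nonempty (Fin h) := ⟨⟨0, hh⟩⟩
      exact absurd (Finset.card_eq_zero.mp hc) (Finset.univ_nonempty.image a).ne_empty
    rw [he, Finset.card_empty]
    exact Nat.zero_le _
  · calc (((Nset h N).filter fun a => (rng1 h N a).card = k).card)
        ≤ ((univ : Finset (Fin h → Fin (N + 1))).filter
            (fun c => (Finset.image c Finset.univ).card = k)).card := by
          apply Finset.card_le_card
          intro a ha
          rw [Finset.mem_filter] at ha ⊢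
          exact ⟨Finset.mem_univ _, ha.2⟩
      _ ≤ k ^ h * (N + 1) ^ k := by
          have hcr := card_filter_range_eq (ι := Fin h) (M := N + 1) (Nat.succ_pos N) hk
          rwa [Fintype.card_fin] at hcr

lemma ER_le (hh : 0 < h) (hp0 : 0 ≤ p) :
    ∑ ω : Fin (N + 1) → Bool, wgt p ω * ((Rset h N ω).card : ℝ)
      ≤ ∑ k ∈ Finset.range h, ((k ^ h * (N + 1) ^ k : ℕ) : ℝ) * p ^ k := by
  rw [ER_eq hp0]
  have key := sum_pow_card_le (Nset h N) (rng1 h N) (h - 1)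
    (fun a ha => by have := noninj_rng1_lt hh ha; omega)
    (fun k => k ^ h * (N + 1) ^ k) (fun k => card_nset_rng1_le hh k) hp0
  rwa [Nat.sub_add_cancel (by omega : 1 ≤ h)] at key

lemma EC_le (hh : 0 < h) (hu : ∀ i, u i ≠ 0) (hp0 : 0 ≤ p) :
    ∑ ω : Fin (N + 1) → Bool, wgt p ω * ((Cset h N u ω).card : ℝ)
      ≤ ∑ k ∈ Finset.range (h + h + 1), ((k ^ (h + h) * (N + 1) ^ (k - 1) : ℕ) : ℝ) * p ^ k := by
  rw [EC_eq u hp0]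
  exact sum_pow_card_le (CPairs h N u) (rng2 h N) (h + h)
    (fun q _ => by have := rng2_card_le (h := h) (N := N) q; omega)
    (fun k => k ^ (h + h) * (N + 1) ^ (k - 1)) (fun k => card_cpairs_rng2_le u hh hu k) hp0

lemma varD_le (hh : 0 < h) (hp0 : 0 ≤ p) :
    ∑ ω : Fin (N + 1) → Bool,
        wgt p ω * (((Dset h N ω).card : ℝ) - ((Iset h N).card : ℝ) * p ^ h) ^ 2
      ≤ ∑ k ∈ Finset.range (h + h), ((k ^ (h + h) * (N + 1) ^ k : ℕ) : ℝ) * p ^ k := by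
  set m : ℝ := ((Iset h N).card : ℝ) * p ^ h with hm
  have e1 : ∀ ω : Fin (N + 1) → Bool,
      wgt p ω * (((Dset h N ω).card : ℝ) - m) ^ 2
      = wgt p ω * (((Dset h N ω).card : ℝ)) ^ 2
        - 2 * m * (wgt p ω * ((Dset h N ω).card : ℝ)) + m ^ 2 * wgt p ω := by
    intro ω; ring
  rw [Finset.sum_congr rfl (fun ω _ => e1 ω), Finset.sum_add_distrib, Finset.sum_sub_distrib,
    ← Finset.mul_sum, ← Finset.mul_sum, ED_eq hp0, ED2_eq hp0, sum_wgt_one hp0, ← hm]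
  have hm2 : 2 * m * m - m ^ 2 * 1 = ∑ q ∈ (Iset h N) ×ˢ (Iset h N), p ^ (h + h) := by
    rw [Finset.sum_const, Finset.card_product, nsmul_eq_mul, hm]
    push_cast
    ring
  have step1 : (∑ q ∈ (Iset h N) ×ˢ (Iset h N), p ^ (rng2 h N q).card) - 2 * m * m + m ^ 2 * 1
      = ∑ q ∈ (Iset h N) ×ˢ (Iset h N), (p ^ (rng2 h N q).card - p ^ (h + h)) := by
    rw [Finset.sum_sub_distrib, ← hm2]
    ring
  rw [step1]
  rw [← Finset.sum_filter_add_sum_filter_not ((Iset h N) ×ˢ (Iset h N))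
    (fun q => (rng2 h N q).card = h + h)]
  have hz : (∑ q ∈ ((Iset h N) ×ˢ (Iset h N)).filter (fun q => (rng2 h N q).card = h + h),
      (p ^ (rng2 h N q).card - p ^ (h + h))) = 0 := by
    refine Finset.sum_eq_zero fun q hq => ?_
    rw [(Finset.mem_filter.mp hq).2, sub_self]
  rw [hz, zero_add]
  calc (∑ q ∈ ((Iset h N) ×ˢ (Iset h N)).filter (fun q => ¬ (rng2 h N q).card = h + h),
      (p ^ (rng2 h N q).card - p ^ (h + h)))
      ≤ ∑ q ∈ ((Iset h N) ×ˢ (Iset h N)).filter (fun q => ¬ (rng2 h N q).card = h + h),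
        p ^ (rng2 h N q).card := by
        refine Finset.sum_le_sum fun q _ => ?_
        have : 0 ≤ p ^ (h + h) := pow_nonneg hp0 _
        linarith
    _ ≤ _ := by
        have key := sum_pow_card_le
          (((Iset h N) ×ˢ (Iset h N)).filter (fun q => ¬ (rng2 h N q).card = h + h))
          (rng2 h N) (h + h - 1)
          (fun q hq => by
            have h1 := rng2_card_le (h := h) (N := N) q
            have h2 := (Finset.mem_filter.mp hq).2
            omega)
          (fun k => k ^ (h + h) * (N + 1) ^ k)
          (fun k => card_pairs_rng2_le hh _ k) hp0
        rwa [Nat.sub_add_cancel (by omega : 1 ≤ h + h)] at key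

end Expectations

section Limits

lemma t_ratio : Tendsto (fun N : ℕ => ((N : ℝ) + 1) / N) atTop (nhds 1) := by
  have h1 : Tendsto (fun N : ℕ => 1 + 1 / (N : ℝ)) atTop (nhds 1) := by
    simpa using (tendsto_const_nhds (x := (1 : ℝ))).add tendsto_one_div_atTop_nhds_zero_nat
  refine Tendsto.congr' ?_ h1
  filter_upwards [eventually_ge_atTop 1] with N hN
  have hN0 : (N : ℝ) ≠ 0 := Nat.cast_ne_zero.mpr (by omega)
  field_simp

variable {h : ℕ} {p : ℕ → ℝ}

/-- H1: `c (N+1)^k p^k / (Np)^m → 0` when `k < m`. -/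
lemma aux_small {k m : ℕ} (hkm : k < m) (hp01 : ∀ N, p N ∈ Set.Ioo (0 : ℝ) 1)
    (hNp : Tendsto (fun N : ℕ => (N : ℝ) * p N) atTop atTop) (c : ℝ) :
    Tendsto (fun N : ℕ => c * ((N : ℝ) + 1) ^ k * p N ^ k / ((N : ℝ) * p N) ^ m)
      atTop (nhds 0) := by
  have t2 : Tendsto (fun N : ℕ => (((N : ℝ) * p N) ^ (m - k))⁻¹) atTop (nhds 0) :=
    (Filter.Tendsto.comp (tendsto_pow_atTop (by omega : m - k ≠ 0)) hNp).inv_tendsto_atTop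
  have tmain : Tendsto (fun N : ℕ => c * (((N : ℝ) + 1) / N) ^ k *
      (((N : ℝ) * p N) ^ (m - k))⁻¹) atTop (nhds 0) := by
    have := ((t_ratio.pow k).const_mul c).mul t2
    simpa using this
  refine Tendsto.congr' ?_ tmain
  filter_upwards [eventually_ge_atTop 1] with N hN
  have hN0 : (N : ℝ) ≠ 0 := Nat.cast_ne_zero.mpr (by omega)
  have hq0 : p N ≠ 0 := (hp01 N).1.ne'
  have hx0 : (N : ℝ) * p N ≠ 0 := mul_ne_zero hN0 hq0
  have hsplit : ((N : ℝ) * p N) ^ m = ((N : ℝ) * p N) ^ k * ((N : ℝ) * p N) ^ (m - k) := by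
    rw [← pow_add]
    congr 1
    omega
  rw [div_pow, mul_pow]
  rw [hsplit]
  field_simp
  ring

/-- the subcritical key: `p (Np)^(h-1) → 0`. -/
lemma aux_key (hh : 0 < h) (hp01 : ∀ N, p N ∈ Set.Ioo (0 : ℝ) 1)
    (hsub : Tendsto (fun N : ℕ => p N * (N : ℝ) ^ (((h : ℝ) - 1) / h)) atTop (nhds 0)) :
    Tendsto (fun N : ℕ => p N * ((N : ℝ) * p N) ^ (h - 1)) atTop (nhds 0) := by
  have hs : Tendsto (fun N : ℕ => (p N * (N : ℝ) ^ (((h : ℝ) - 1) / h)) ^ h) atTop (nhds 0) := by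
    have := hsub.pow h
    rwa [zero_pow (by omega : h ≠ 0)] at this
  refine Tendsto.congr' ?_ hs
  filter_upwards [eventually_ge_atTop 1] with N hN
  have hN0 : (0 : ℝ) ≤ (N : ℝ) := Nat.cast_nonneg N
  have hrw : ((N : ℝ) ^ (((h : ℝ) - 1) / h)) ^ h = (N : ℝ) ^ (h - 1) := by
    rw [← Real.rpow_natCast ((N : ℝ) ^ (((h : ℝ) - 1) / h)) h, ← Real.rpow_mul hN0]
    have : ((h : ℝ) - 1) / h * h = ((h - 1 : ℕ) : ℝ) := by
      rw [Nat.cast_sub (by omega : 1 ≤ h), Nat.cast_one]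
      field_simp
    rw [this, Real.rpow_natCast]
  rw [mul_pow, hrw, mul_pow]
  have hq : p N * (p N ^ (h - 1)) = p N ^ h := by
    rw [← pow_succ']
    congr 1
    omega
  rw [← hq]
  ring

/-- H2: `c (N+1)^(k-1) p^k / (Np)^h → 0` for `1 ≤ k ≤ 2h`. -/
lemma aux_coll {k : ℕ} (hh : 0 < h) (hk1 : 1 ≤ k) (hk2 : k ≤ h + h)
    (hp01 : ∀ N, p N ∈ Set.Ioo (0 : ℝ) 1)
    (hp0 : Tendsto p atTop (nhds 0))
    (hNp : Tendsto (fun N : ℕ => (N : ℝ) * p N) atTop atTop)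
    (hsub : Tendsto (fun N : ℕ => p N * (N : ℝ) ^ (((h : ℝ) - 1) / h)) atTop (nhds 0))
    (c : ℝ) (hc : 0 ≤ c) :
    Tendsto (fun N : ℕ => c * ((N : ℝ) + 1) ^ (k - 1) * p N ^ k / ((N : ℝ) * p N) ^ h)
      atTop (nhds 0) := by
  have hkey := aux_key hh hp01 hsub
  -- common eventual rewriting: term = c * ((N+1)/N)^(k-1) * (p N * (Np)^(k-1)) / (Np)^h
  by_cases hkh : k ≤ h
  · -- small k: term = c ((N+1)/N)^(k-1) * p N * ((Np)^(h-(k-1)))⁻¹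
    have t2 : Tendsto (fun N : ℕ => (((N : ℝ) * p N) ^ (h - (k - 1)))⁻¹) atTop (nhds 0) :=
      (Filter.Tendsto.comp (tendsto_pow_atTop (by omega : h - (k - 1) ≠ 0)) hNp).inv_tendsto_atTop
    have tmain : Tendsto (fun N : ℕ => c * (((N : ℝ) + 1) / N) ^ (k - 1) * p N *
        (((N : ℝ) * p N) ^ (h - (k - 1)))⁻¹) atTop (nhds 0) := by
      have := (((t_ratio.pow (k - 1)).const_mul c).mul hp0).mul t2
      simpa using this
    refine Tendsto.congr' ?_ tmain
    filter_upwards [eventually_ge_atTop 1] with N hN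
    have hN0 : (N : ℝ) ≠ 0 := Nat.cast_ne_zero.mpr (by omega)
    have hq0 : p N ≠ 0 := (hp01 N).1.ne'
    have hsplit : ((N : ℝ) * p N) ^ h
        = ((N : ℝ) * p N) ^ (k - 1) * ((N : ℝ) * p N) ^ (h - (k - 1)) := by
      rw [← pow_add]; congr 1; omega
    have hqk : p N ^ k = p N ^ (k - 1) * p N := by rw [← pow_succ]; congr 1; omega
    rw [div_pow, hsplit, hqk, mul_pow]
    field_simp
    ring
  · -- large k: squeeze by c ((N+1)/N)^(k-1) * (p N * (Np)^(h-1))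
    push_neg at hkh
    have tmain : Tendsto (fun N : ℕ => c * (((N : ℝ) + 1) / N) ^ (k - 1) *
        (p N * ((N : ℝ) * p N) ^ (h - 1))) atTop (nhds 0) := by
      have := ((t_ratio.pow (k - 1)).const_mul c).mul hkey
      simpa using this
    refine squeeze_zero' ?_ ?_ tmain
    · filter_upwards [eventually_ge_atTop 1] with N hN
      have hq0 : 0 < p N := (hp01 N).1
      have hN0 : (0 : ℝ) < N := by exact_mod_cast (by omega : 0 < N)
      positivity
    · filter_upwards [hNp.eventually_ge_atTop 1, eventually_ge_atTop 1] with N hx hN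
      have hq0 : 0 < p N := (hp01 N).1
      have hN0 : (0 : ℝ) < N := by exact_mod_cast (by omega : 0 < N)
      have hx0 : (0 : ℝ) < (N : ℝ) * p N := by positivity
      have heq : c * ((N : ℝ) + 1) ^ (k - 1) * p N ^ k / ((N : ℝ) * p N) ^ h
          = c * (((N : ℝ) + 1) / N) ^ (k - 1) * (p N * ((N : ℝ) * p N) ^ (k - 1 - h)) := by
        have e1 : ((N : ℝ) * p N) ^ (k - 1)
            = ((N : ℝ) * p N) ^ h * ((N : ℝ) * p N) ^ (k - 1 - h) := by
          rw [← pow_add]; congr 1; omega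
        have e2 : ((N : ℝ) + 1) ^ (k - 1) * p N ^ (k - 1)
            = (((N : ℝ) + 1) / N) ^ (k - 1) * ((N : ℝ) * p N) ^ (k - 1) := by
          rw [div_pow, mul_pow]
          field_simp
        have e3 : p N ^ k = p N ^ (k - 1) * p N := by rw [← pow_succ]; congr 1; omega
        calc c * ((N : ℝ) + 1) ^ (k - 1) * p N ^ k / ((N : ℝ) * p N) ^ h
            = (((N : ℝ) + 1) ^ (k - 1) * p N ^ (k - 1)) * (c * p N) / ((N : ℝ) * p N) ^ h := by
              rw [e3]; ring
          _ = ((((N : ℝ) + 1) / N) ^ (k - 1) *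
                (((N : ℝ) * p N) ^ h * ((N : ℝ) * p N) ^ (k - 1 - h))) * (c * p N)
                / ((N : ℝ) * p N) ^ h := by rw [e2, ← e1]
          _ = c * (((N : ℝ) + 1) / N) ^ (k - 1) * (p N * ((N : ℝ) * p N) ^ (k - 1 - h)) := by
              field_simp
      rw [heq]
      refine mul_le_mul_of_nonneg_left ?_ (by positivity)
      refine mul_le_mul_of_nonneg_left ?_ hq0.le
      exact pow_le_pow_right₀ hx (by omega)
end Limits

section Iasymp

lemma Iset_card (h N : ℕ) : (Iset h N).card = (N + 1).descFactorial h := by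
  rw [Iset, ← Fintype.card_subtype,
    Fintype.card_congr (Equiv.subtypeInjectiveEquivEmbedding (Fin h) (Fin (N + 1))),
    Fintype.card_embedding_eq, Fintype.card_fin, Fintype.card_fin]

lemma t_Iset (h : ℕ) :
    Tendsto (fun N : ℕ => ((Iset h N).card : ℝ) / (N : ℝ) ^ h) atTop (nhds 1) := by
  have hterm : ∀ i ∈ Finset.range h,
      Tendsto (fun N : ℕ => ((N + 1 - i : ℕ) : ℝ) / (N : ℝ)) atTop (nhds 1) := by
    intro i _
    have hbase : Tendsto (fun N : ℕ => 1 + ((1 : ℝ) - i) / N) atTop (nhds 1) := by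
      simpa using tendsto_const_nhds.add (tendsto_const_div_atTop_nhds_zero_nat ((1 : ℝ) - i))
    refine Tendsto.congr' ?_ hbase
    filter_upwards [eventually_ge_atTop (i + 1)] with N hN
    have hN0 : (N : ℝ) ≠ 0 := Nat.cast_ne_zero.mpr (by omega)
    have hcast : ((N + 1 - i : ℕ) : ℝ) = (N : ℝ) + 1 - i := by
      rw [Nat.cast_sub (by omega)]
      push_cast
      ring
    rw [hcast]
    field_simp
    ring
  have hprod := tendsto_finset_prod (Finset.range h)
    (fun i hi => hterm i hi)
  rw [Finset.prod_const_one] at hprod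
  refine Tendsto.congr' ?_ hprod
  filter_upwards [eventually_ge_atTop 1] with N hN
  have hN0 : (N : ℝ) ≠ 0 := Nat.cast_ne_zero.mpr (by omega)
  rw [Finset.prod_div_distrib, Finset.prod_const, Finset.card_range, Iset_card,
    Nat.descFactorial_eq_prod_range, Nat.cast_prod]

end Iasymp

section Main
variable {h : ℕ} (u : Fin h → ℤ)

set_option maxHeartbeats 1000000 in
lemma key_bound (hh : 0 < h) (hu : ∀ i, u i ≠ 0) {N : ℕ} {pp ε : ℝ}
    (hp0 : 0 < pp) (hp1 : pp < 1) (hε : 0 < ε)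
    (hx1 : 1 ≤ (N : ℝ) * pp)
    (hmφ : |((Iset h N).card : ℝ) * pp ^ h / ((N : ℝ) * pp) ^ h - 1| ≤ ε / 2) :
    coin N pp {ω | ε < |((thetaL h u : ℝ)) * ((LA h N u ω).card : ℝ)
        / ((N : ℝ) * pp) ^ h - 1|}
      ≤ ENNReal.ofReal
        ((∑ k ∈ Finset.range (h + h), ((k ^ (h + h) * (N + 1) ^ k : ℕ) : ℝ) * pp ^ k)
            / (ε / 4 * ((N : ℝ) * pp) ^ h) ^ 2
          + ((thetaL h u : ℝ) *
                (∑ k ∈ Finset.range h, ((k ^ h * (N + 1) ^ k : ℕ) : ℝ) * pp ^ k)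
              + ∑ k ∈ Finset.range (h + h + 1),
                  ((k ^ (h + h) * (N + 1) ^ (k - 1) : ℕ) : ℝ) * pp ^ k)
            / (ε / 4 * ((N : ℝ) * pp) ^ h)) := by
  classical
  have hφ0 : (0 : ℝ) < ((N : ℝ) * pp) ^ h := pow_pos (by linarith) h
  set φ : ℝ := ((N : ℝ) * pp) ^ h with hφdef
  have hs0 : (0 : ℝ) < ε / 4 * φ := by positivity
  set s : ℝ := ε / 4 * φ with hsdef
  set m : ℝ := ((Iset h N).card : ℝ) * pp ^ h with hmdef
  have hθG : thetaL h u = (G h u).card := thetaL_eq h u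
  have hsub : {ω | ε < |((thetaL h u : ℝ)) * ((LA h N u ω).card : ℝ) / φ - 1|}
      ⊆ {ω | s ^ 2 ≤ (((Dset h N ω).card : ℝ) - m) ^ 2}
        ∪ {ω | s ≤ ((thetaL h u : ℝ)) * ((Rset h N ω).card : ℝ) + ((Cset h N u ω).card : ℝ)} := by
    intro ω hω
    simp only [Set.mem_setOf_eq] at hω
    by_contra hc
    rw [Set.mem_union, Set.mem_setOf_eq, Set.mem_setOf_eq] at hc
    push_neg at hc
    obtain ⟨h1, h2⟩ := hc
    have habs1 : |((Dset h N ω).card : ℝ) - m| < s := by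
      by_contra hcc
      push_neg at hcc
      have hle : s ^ 2 ≤ (((Dset h N ω).card : ℝ) - m) ^ 2 := by
        calc s ^ 2 ≤ |((Dset h N ω).card : ℝ) - m| ^ 2 := by
              exact pow_le_pow_left₀ hs0.le hcc 2
          _ = (((Dset h N ω).card : ℝ) - m) ^ 2 := sq_abs _
      linarith
    have hnat1 := theta_LA_le h N u ω
    have hnat2 := D_le_theta_LA h N u ω
    have hr1 : (thetaL h u : ℝ) * ((LA h N u ω).card : ℝ)
        ≤ ((Dset h N ω).card : ℝ) + (thetaL h u : ℝ) * ((Rset h N ω).card : ℝ) := by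
      rw [hθG]; exact_mod_cast hnat1
    have hr2 : ((Dset h N ω).card : ℝ)
        ≤ (thetaL h u : ℝ) * ((LA h N u ω).card : ℝ) + ((Cset h N u ω).card : ℝ) := by
      rw [hθG]; exact_mod_cast hnat2
    have hC0 : (0 : ℝ) ≤ ((Cset h N u ω).card : ℝ) := Nat.cast_nonneg _
    have hR0 : (0 : ℝ) ≤ (thetaL h u : ℝ) * ((Rset h N ω).card : ℝ) := by positivity
    have habs2 : |(thetaL h u : ℝ) * ((LA h N u ω).card : ℝ) - ((Dset h N ω).card : ℝ)|
        ≤ (thetaL h u : ℝ) * ((Rset h N ω).card : ℝ) + ((Cset h N u ω).card : ℝ) := by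
      rw [abs_le]
      constructor
      · linarith
      · linarith
    have hmφ' : |m - φ| ≤ ε / 2 * φ := by
      have he : |m / φ - 1| * φ = |m - φ| := by
        have h1' : m / φ - 1 = (m - φ) / φ := by field_simp
        rw [h1', abs_div, abs_of_pos hφ0, div_mul_cancel₀ _ hφ0.ne']
      calc |m - φ| = |m / φ - 1| * φ := he.symm
        _ ≤ ε / 2 * φ := mul_le_mul_of_nonneg_right hmφ hφ0.le
    have htot : |(thetaL h u : ℝ) * ((LA h N u ω).card : ℝ) - φ| < ε * φ := by
      have hchain : |(thetaL h u : ℝ) * ((LA h N u ω).card : ℝ) - φ|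
          ≤ |(thetaL h u : ℝ) * ((LA h N u ω).card : ℝ) - ((Dset h N ω).card : ℝ)|
            + |((Dset h N ω).card : ℝ) - m| + |m - φ| := by
        have ht1 := abs_sub_le ((thetaL h u : ℝ) * ((LA h N u ω).card : ℝ))
          (((Dset h N ω).card : ℝ)) φ
        have ht2 := abs_sub_le (((Dset h N ω).card : ℝ)) m φ
        linarith
      have hsv : s = ε / 4 * φ := hsdef
      linarith
    have hfrac : |(thetaL h u : ℝ) * ((LA h N u ω).card : ℝ) / φ - 1| < ε := by
      have he : (thetaL h u : ℝ) * ((LA h N u ω).card : ℝ) / φ - 1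
          = ((thetaL h u : ℝ) * ((LA h N u ω).card : ℝ) - φ) / φ := by
        field_simp
      rw [he, abs_div, abs_of_pos hφ0, div_lt_iff₀ hφ0]
      exact htot
    linarith
  have hA0 : (0:ℝ) ≤ (∑ k ∈ Finset.range (h + h),
      ((k ^ (h + h) * (N + 1) ^ k : ℕ) : ℝ) * pp ^ k) / s ^ 2 := by
    apply div_nonneg ?_ (by positivity)
    exact Finset.sum_nonneg fun k _ => by positivity
  have hB0 : (0:ℝ) ≤ ((thetaL h u : ℝ) *
      (∑ k ∈ Finset.range h, ((k ^ h * (N + 1) ^ k : ℕ) : ℝ) * pp ^ k)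
      + ∑ k ∈ Finset.range (h + h + 1),
          ((k ^ (h + h) * (N + 1) ^ (k - 1) : ℕ) : ℝ) * pp ^ k) / s := by
    apply div_nonneg ?_ hs0.le
    have hr : (0:ℝ) ≤ ∑ k ∈ Finset.range h, ((k ^ h * (N + 1) ^ k : ℕ) : ℝ) * pp ^ k :=
      Finset.sum_nonneg fun k _ => by positivity
    have hc : (0:ℝ) ≤ ∑ k ∈ Finset.range (h + h + 1),
        ((k ^ (h + h) * (N + 1) ^ (k - 1) : ℕ) : ℝ) * pp ^ k :=
      Finset.sum_nonneg fun k _ => by positivity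
    positivity
  calc coin N pp {ω | ε < |((thetaL h u : ℝ)) * ((LA h N u ω).card : ℝ) / φ - 1|}
      ≤ coin N pp ({ω | s ^ 2 ≤ (((Dset h N ω).card : ℝ) - m) ^ 2}
        ∪ {ω | s ≤ ((thetaL h u : ℝ)) * ((Rset h N ω).card : ℝ)
            + ((Cset h N u ω).card : ℝ)}) := measure_mono hsub
    _ ≤ coin N pp {ω | s ^ 2 ≤ (((Dset h N ω).card : ℝ) - m) ^ 2}
        + coin N pp {ω | s ≤ ((thetaL h u : ℝ)) * ((Rset h N ω).card : ℝ)
            + ((Cset h N u ω).card : ℝ)} := measure_union_le _ _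
    _ ≤ ENNReal.ofReal ((∑ k ∈ Finset.range (h + h),
            ((k ^ (h + h) * (N + 1) ^ k : ℕ) : ℝ) * pp ^ k) / s ^ 2)
        + ENNReal.ofReal (((thetaL h u : ℝ) *
            (∑ k ∈ Finset.range h, ((k ^ h * (N + 1) ^ k : ℕ) : ℝ) * pp ^ k)
          + ∑ k ∈ Finset.range (h + h + 1),
              ((k ^ (h + h) * (N + 1) ^ (k - 1) : ℕ) : ℝ) * pp ^ k) / s) := by
        refine add_le_add ?_ ?_
        · refine le_trans (coin_markov hp0.le hp1.le
            (fun ω => (((Dset h N ω).card : ℝ) - m) ^ 2) (fun ω => sq_nonneg _)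
            (by positivity : (0:ℝ) < s ^ 2)) ?_
          apply ENNReal.ofReal_le_ofReal
          exact (div_le_div_iff_of_pos_right (by positivity)).mpr (varD_le hh hp0.le)
        · refine le_trans (coin_markov hp0.le hp1.le
            (fun ω => ((thetaL h u : ℝ)) * ((Rset h N ω).card : ℝ)
              + ((Cset h N u ω).card : ℝ))
            (fun ω => by positivity) hs0) ?_
          apply ENNReal.ofReal_le_ofReal
          have hexp : (∑ ω : Fin (N + 1) → Bool, wgt pp ω *
                ((thetaL h u : ℝ) * ((Rset h N ω).card : ℝ) + ((Cset h N u ω).card : ℝ)))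
              = (thetaL h u : ℝ) *
                  (∑ ω : Fin (N + 1) → Bool, wgt pp ω * ((Rset h N ω).card : ℝ))
                + ∑ ω : Fin (N + 1) → Bool, wgt pp ω * ((Cset h N u ω).card : ℝ) := by
            rw [Finset.mul_sum, ← Finset.sum_add_distrib]
            exact Finset.sum_congr rfl fun ω _ => by ring
          rw [hexp]
          have hle2 : (thetaL h u : ℝ) *
                (∑ ω : Fin (N + 1) → Bool, wgt pp ω * ((Rset h N ω).card : ℝ))
              + (∑ ω : Fin (N + 1) → Bool, wgt pp ω * ((Cset h N u ω).card : ℝ))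
              ≤ (thetaL h u : ℝ) *
                (∑ k ∈ Finset.range h, ((k ^ h * (N + 1) ^ k : ℕ) : ℝ) * pp ^ k)
              + ∑ k ∈ Finset.range (h + h + 1),
                  ((k ^ (h + h) * (N + 1) ^ (k - 1) : ℕ) : ℝ) * pp ^ k :=
            add_le_add (mul_le_mul_of_nonneg_left (ER_le hh hp0.le) (Nat.cast_nonneg _))
              (EC_le u hh hu hp0.le)
          exact (div_le_div_iff_of_pos_right hs0).mpr hle2
    _ ≤ _ := by
        rw [← ENNReal.ofReal_add hA0 hB0]

end Main

section Tend
variable {h : ℕ} {p : ℕ → ℝ}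

lemma tend_VarB (hh : 0 < h) (hp01 : ∀ N, p N ∈ Set.Ioo (0 : ℝ) 1)
    (hNp : Tendsto (fun N : ℕ => (N : ℝ) * p N) atTop atTop) :
    Tendsto (fun N : ℕ => (∑ k ∈ Finset.range (h + h),
        ((k ^ (h + h) * (N + 1) ^ k : ℕ) : ℝ) * p N ^ k) / ((N : ℝ) * p N) ^ (h + h))
      atTop (nhds 0) := by
  have hterm : ∀ k ∈ Finset.range (h + h), Tendsto (fun N : ℕ =>
      ((k ^ (h + h) * (N + 1) ^ k : ℕ) : ℝ) * p N ^ k / ((N : ℝ) * p N) ^ (h + h))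
      atTop (nhds 0) := by
    intro k hk
    refine (aux_small (Finset.mem_range.mp hk) hp01 hNp ((k : ℝ) ^ (h + h))).congr fun N => ?_
    push_cast
    ring
  have hsum := tendsto_finset_sum (Finset.range (h + h)) hterm
  rw [Finset.sum_const_zero] at hsum
  refine hsum.congr fun N => ?_
  rw [Finset.sum_div]

lemma tend_RB (hh : 0 < h) (hp01 : ∀ N, p N ∈ Set.Ioo (0 : ℝ) 1)
    (hNp : Tendsto (fun N : ℕ => (N : ℝ) * p N) atTop atTop) :
    Tendsto (fun N : ℕ => (∑ k ∈ Finset.range h,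
        ((k ^ h * (N + 1) ^ k : ℕ) : ℝ) * p N ^ k) / ((N : ℝ) * p N) ^ h)
      atTop (nhds 0) := by
  have hterm : ∀ k ∈ Finset.range h, Tendsto (fun N : ℕ =>
      ((k ^ h * (N + 1) ^ k : ℕ) : ℝ) * p N ^ k / ((N : ℝ) * p N) ^ h)
      atTop (nhds 0) := by
    intro k hk
    refine (aux_small (Finset.mem_range.mp hk) hp01 hNp ((k : ℝ) ^ h)).congr fun N => ?_
    push_cast
    ring
  have hsum := tendsto_finset_sum (Finset.range h) hterm
  rw [Finset.sum_const_zero] at hsum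
  refine hsum.congr fun N => ?_
  rw [Finset.sum_div]

lemma tend_CB (hh : 0 < h) (hp01 : ∀ N, p N ∈ Set.Ioo (0 : ℝ) 1)
    (hp0 : Tendsto p atTop (nhds 0))
    (hNp : Tendsto (fun N : ℕ => (N : ℝ) * p N) atTop atTop)
    (hsub : Tendsto (fun N : ℕ => p N * (N : ℝ) ^ (((h : ℝ) - 1) / h)) atTop (nhds 0)) :
    Tendsto (fun N : ℕ => (∑ k ∈ Finset.range (h + h + 1),
        ((k ^ (h + h) * (N + 1) ^ (k - 1) : ℕ) : ℝ) * p N ^ k) / ((N : ℝ) * p N) ^ h)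
      atTop (nhds 0) := by
  have hterm : ∀ k ∈ Finset.range (h + h + 1), Tendsto (fun N : ℕ =>
      ((k ^ (h + h) * (N + 1) ^ (k - 1) : ℕ) : ℝ) * p N ^ k / ((N : ℝ) * p N) ^ h)
      atTop (nhds 0) := by
    intro k hk
    have hk' := Finset.mem_range.mp hk
    rcases Nat.eq_zero_or_pos k with rfl | hk1
    · have hz : (fun N : ℕ =>
          ((0 ^ (h + h) * (N + 1) ^ (0 - 1) : ℕ) : ℝ) * p N ^ 0 / ((N : ℝ) * p N) ^ h)
          = fun _ => (0 : ℝ) := by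
        funext N
        rw [Nat.zero_pow (by omega : 0 < h + h)]
        simp
      rw [hz]
      exact tendsto_const_nhds
    · refine (aux_coll hh hk1 (by omega : k ≤ h + h) hp01 hp0 hNp hsub ((k : ℝ) ^ (h + h))
        (by positivity)).congr fun N => ?_
      push_cast
      ring
  have hsum := tendsto_finset_sum (Finset.range (h + h + 1)) hterm
  rw [Finset.sum_const_zero] at hsum
  refine hsum.congr fun N => ?_
  rw [Finset.sum_div]

lemma tend_mphi (hh : 0 < h) (hp01 : ∀ N, p N ∈ Set.Ioo (0 : ℝ) 1) :
    Tendsto (fun N : ℕ => ((Iset h N).card : ℝ) * p N ^ h / ((N : ℝ) * p N) ^ h)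
      atTop (nhds 1) := by
  refine Tendsto.congr' ?_ (t_Iset h)
  filter_upwards [eventually_ge_atTop 1] with N hN
  have hN0 : (N : ℝ) ≠ 0 := Nat.cast_ne_zero.mpr (by omega)
  have hq0 : p N ≠ 0 := (hp01 N).1.ne'
  rw [mul_pow, mul_comm ((N : ℝ) ^ h) (p N ^ h), ← div_div, mul_div_assoc,
    div_self (pow_ne_zero _ hq0), mul_one]

end Tend

end HMP

set_option maxHeartbeats 1000000 in
theorem subcritical_size_of_LA
    (h : ℕ) (hh : 2 ≤ h) (u : Fin h → ℤ) (hu : ∀ i, u i ≠ 0)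
    (hgcd : Finset.univ.gcd u = 1)
    (p : ℕ → ℝ) (hp01 : ∀ N, p N ∈ Set.Ioo (0 : ℝ) 1)
    (hp0 : Filter.Tendsto p Filter.atTop (nhds 0))
    (hNp : Filter.Tendsto (fun N : ℕ => (N : ℝ) * p N) Filter.atTop Filter.atTop)
    (hsub : Filter.Tendsto (fun N : ℕ => p N * (N : ℝ) ^ (((h : ℝ) - 1) / h))
      Filter.atTop (nhds 0)) :
    ∀ ε > (0 : ℝ),
      Filter.Tendsto
        (fun N : ℕ => HM.coin N (p N)
          {ω | ε < |(HM.thetaL h u : ℝ) * ((HM.LA h N u ω).card : ℝ)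
            / ((N : ℝ) * p N) ^ h - 1|})
        Filter.atTop (nhds 0) := by
  intro ε hε
  have hh0 : 0 < h := by omega
  -- the real-valued bound sequence
  set g : ℕ → ℝ := fun N =>
    (∑ k ∈ Finset.range (h + h), ((k ^ (h + h) * (N + 1) ^ k : ℕ) : ℝ) * p N ^ k)
        / (ε / 4 * ((N : ℝ) * p N) ^ h) ^ 2
      + ((HM.thetaL h u : ℝ) *
            (∑ k ∈ Finset.range h, ((k ^ h * (N + 1) ^ k : ℕ) : ℝ) * p N ^ k)
          + ∑ k ∈ Finset.range (h + h + 1),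
              ((k ^ (h + h) * (N + 1) ^ (k - 1) : ℕ) : ℝ) * p N ^ k)
        / (ε / 4 * ((N : ℝ) * p N) ^ h) with hgdef
  have hg : Filter.Tendsto g Filter.atTop (nhds 0) := by
    have h1 := HMP.tend_VarB hh0 hp01 hNp
    have h2 := HMP.tend_RB hh0 hp01 hNp
    have h3 := HMP.tend_CB hh0 hp01 hp0 hNp hsub
    have hg' : Filter.Tendsto (fun N : ℕ =>
        (4 / ε) ^ 2 * ((∑ k ∈ Finset.range (h + h),
            ((k ^ (h + h) * (N + 1) ^ k : ℕ) : ℝ) * p N ^ k) / ((N : ℝ) * p N) ^ (h + h))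
        + (4 / ε) * ((HM.thetaL h u : ℝ) *
            ((∑ k ∈ Finset.range h, ((k ^ h * (N + 1) ^ k : ℕ) : ℝ) * p N ^ k)
              / ((N : ℝ) * p N) ^ h)
          + (∑ k ∈ Finset.range (h + h + 1),
              ((k ^ (h + h) * (N + 1) ^ (k - 1) : ℕ) : ℝ) * p N ^ k) / ((N : ℝ) * p N) ^ h))
        Filter.atTop (nhds 0) := by
      have := (h1.const_mul ((4 / ε) ^ 2)).add
        (((h2.const_mul ((HM.thetaL h u : ℝ))).add h3).const_mul (4 / ε))
      simpa using this
    refine Filter.Tendsto.congr' ?_ hg'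
    filter_upwards [eventually_ge_atTop 1, hNp.eventually_ge_atTop 1] with N hN1 hx1
    have hq0 : p N ≠ 0 := (hp01 N).1.ne'
    have hN0 : (N : ℝ) ≠ 0 := Nat.cast_ne_zero.mpr (by omega)
    have hx0 : ((N : ℝ) * p N) ≠ 0 := mul_ne_zero hN0 hq0
    have hε0 : ε ≠ 0 := hε.ne'
    have hxh : ((N : ℝ) * p N) ^ (h + h) = (((N : ℝ) * p N) ^ h) ^ 2 := by
      rw [pow_add, sq]
    rw [hgdef]
    dsimp only
    rw [hxh]
    have hφ0 : (((N : ℝ) * p N) ^ h) ≠ 0 := pow_ne_zero _ hx0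
    field_simp
  -- the eventual accuracy of the mean
  have hmev : ∀ᶠ N in Filter.atTop,
      |((HMP.Iset h N).card : ℝ) * p N ^ h / ((N : ℝ) * p N) ^ h - 1| ≤ ε / 2 := by
    have := Metric.tendsto_nhds.mp (HMP.tend_mphi hh0 hp01) (ε / 2) (by positivity)
    filter_upwards [this] with N hN
    rw [Real.dist_eq] at hN
    exact hN.le
  have hupper : Filter.Tendsto (fun N : ℕ => ENNReal.ofReal (g N)) Filter.atTop (nhds 0) := by
    have := ENNReal.tendsto_ofReal hg
    simpa using this
  refine tendsto_of_tendsto_of_tendsto_of_le_of_le' tendsto_const_nhds hupper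
    (Filter.Eventually.of_forall fun N => zero_le) ?_
  filter_upwards [eventually_ge_atTop 1, hNp.eventually_ge_atTop 1, hmev] with N hN1 hx1 hm
  exact HMP.key_bound u hh0 hu (hp01 N).1 (hp01 N).2 hε hx1 hm
end

section
/- Assume h ≥ 3 and suppose p(N) → 0 and N·p(N)^{h/(h-1)} → ∞ as N → ∞. Then there exists a constant c > 0 such that E[|L(A)^c|] ≥ c·(1/p(N))^{h/(h-1)} for all sufficiently large N. -/
open MeasureTheory Finset Filter

namespace HMX

open HM

/-- the boundary window positions -/
def D (N K : ℕ) : Finset (Fin (N + 1)) :=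
  univ.filter fun b => (b : ℕ) < K ∨ N < (b : ℕ) + K

/-- selected boundary positions -/
def S (N K : ℕ) (ω : Fin (N + 1) → Bool) : Finset (Fin (N + 1)) :=
  (D N K).filter fun b => ω b = true

lemma det_bound (h N K : ℕ) (hh : 1 ≤ h) (u : Fin h → ℤ) (hu : ∀ i, u i ≠ 0)
    (hK : K ≤ N) (ω : Fin (N + 1) → Bool) :
    K ≤ (LAc h N u ω).card + (S N K ω).card ^ h := by
  classical
  set W : Finset ℤ := Finset.Ioc (sL h u * N - K) (sL h u * N) with hW
  have hcardW : W.card = K := by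
    rw [hW, Int.card_Ioc]
    omega
  -- mL ≥ 1
  have hi0 : (0 : ℕ) < h := hh
  have hsL : 0 ≤ sL h u := Finset.sum_nonneg fun i hi => (Finset.mem_filter.mp hi).2.le
  have hdL : 0 ≤ dL h u := Finset.sum_nonneg fun i hi => abs_nonneg _
  have hmL : 1 ≤ sL h u + dL h u := by
    rcases lt_or_gt_of_ne (hu ⟨0, hi0⟩) with hneg | hpos
    · have : |u ⟨0, hi0⟩| ≤ dL h u :=
        Finset.single_le_sum (f := fun i => |u i|) (fun i _ => abs_nonneg _)
          (by simp [hneg])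
      have h1 : (1:ℤ) ≤ |u ⟨0, hi0⟩| := by
        rw [abs_of_neg hneg]; omega
      linarith
    · have : u ⟨0, hi0⟩ ≤ sL h u :=
        Finset.single_le_sum (f := fun i => u i)
          (fun i hi => (Finset.mem_filter.mp hi).2.le) (by simp [hpos])
      linarith
  have hWsub : W ⊆ Finset.Icc (-(dL h u * N)) (sL h u * N) := by
    intro n hn
    rw [hW, Finset.mem_Ioc] at hn
    rw [Finset.mem_Icc]
    refine ⟨?_, hn.2⟩
    have : (K : ℤ) ≤ N := by exact_mod_cast hK
    nlinarith [hn.1, Int.ofNat_nonneg N]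
  have key : W ∩ LA h N u ω ⊆
      (Fintype.piFinset fun _ : Fin h => S N K ω).image
        fun a => ∑ i, u i * ((a i : ℕ) : ℤ) := by
    intro n hn
    rw [Finset.mem_inter] at hn
    obtain ⟨hw, hla⟩ := hn
    rw [LA, Finset.mem_image] at hla
    obtain ⟨a, ha, rfl⟩ := hla
    rw [Finset.mem_filter] at ha
    have hωa := ha.2
    rw [hW, Finset.mem_Ioc] at hw
    -- sum splitting
    have hsplit : (∑ i, u i * ((a i : ℕ) : ℤ)) =
        (∑ i ∈ univ.filter fun i => 0 < u i, u i * ((a i : ℕ) : ℤ)) -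
        (∑ i ∈ univ.filter fun i => u i < 0, (-(u i)) * ((a i : ℕ) : ℤ)) := by
      rw [← Finset.sum_filter_add_sum_filter_not univ (fun i => 0 < u i)
        (fun i => u i * ((a i : ℕ) : ℤ))]
      have : univ.filter (fun i => ¬ 0 < u i) = univ.filter fun i => u i < 0 := by
        apply Finset.filter_congr
        intro i _
        have := hu i
        constructor <;> intro hx <;> omega
      rw [this, sub_eq_add_neg, ← Finset.sum_neg_distrib]
      congr 1
      exact Finset.sum_congr rfl fun i _ => by ring
    set SP := ∑ i ∈ univ.filter fun i => 0 < u i, u i * ((a i : ℕ) : ℤ) with hSP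
    set SQ := ∑ i ∈ univ.filter fun i => u i < 0, (-(u i)) * ((a i : ℕ) : ℤ) with hSQ
    have haN : ∀ i, ((a i : ℕ) : ℤ) ≤ N := fun i => by
      exact_mod_cast Nat.le_of_lt_succ (a i).2
    have ha0 : ∀ i, (0:ℤ) ≤ ((a i : ℕ) : ℤ) := fun i => Int.ofNat_nonneg _
    have hSPle : SP ≤ sL h u * N := by
      rw [hSP, sL, Finset.sum_mul]
      refine Finset.sum_le_sum fun i hi => ?_
      have hpos := (Finset.mem_filter.mp hi).2
      exact mul_le_mul_of_nonneg_left (haN i) hpos.le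
    have hSQ0 : 0 ≤ SQ := Finset.sum_nonneg fun i hi => by
      have := (Finset.mem_filter.mp hi).2
      exact mul_nonneg (by omega) (ha0 i)
    have hSQK : SQ < K := by
      have := hw.1
      rw [hsplit] at this
      linarith
    have hRK : sL h u * N - SP < K := by
      have := hw.1
      rw [hsplit] at this
      linarith
    rw [Finset.mem_image]
    refine ⟨a, ?_, rfl⟩
    rw [Fintype.mem_piFinset]
    intro i
    rw [S, Finset.mem_filter, D, Finset.mem_filter]
    refine ⟨⟨Finset.mem_univ _, ?_⟩, hωa i⟩
    rcases lt_or_gt_of_ne (hu i) with hneg | hpos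
    · -- a i < K
      left
      have hterm : (-(u i)) * ((a i : ℕ) : ℤ) ≤ SQ :=
        Finset.single_le_sum (f := fun j => (-(u j)) * ((a j : ℕ) : ℤ))
          (fun j hj => mul_nonneg (by have := (Finset.mem_filter.mp hj).2; omega) (ha0 j))
          (by simp [hneg])
      have h1 : ((a i : ℕ) : ℤ) ≤ (-(u i)) * ((a i : ℕ) : ℤ) := by
        nlinarith [ha0 i]
      have : ((a i : ℕ) : ℤ) < K := by linarith
      exact_mod_cast this
    · -- N < a i + K
      right
      have hsum : ∑ j ∈ univ.filter (fun j => 0 < u j), u j * ((N:ℤ) - (a j : ℕ)) =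
          sL h u * N - SP := by
        rw [hSP, sL, Finset.sum_mul, ← Finset.sum_sub_distrib]
        exact Finset.sum_congr rfl fun j _ => by ring
      have hterm : u i * ((N:ℤ) - (a i : ℕ)) ≤ sL h u * N - SP := by
        rw [← hsum]
        exact Finset.single_le_sum (f := fun j => u j * ((N:ℤ) - (a j : ℕ)))
          (fun j hj => mul_nonneg (Finset.mem_filter.mp hj).2.le (by linarith [haN j]))
          (by simp [hpos])
      have h1 : (N:ℤ) - (a i : ℕ) ≤ u i * ((N:ℤ) - (a i : ℕ)) := by
        nlinarith [haN i]
      have : (N:ℤ) < (a i : ℕ) + K := by linarith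
      exact_mod_cast this
  -- assemble counts
  have h1 : (W \ LA h N u ω).card + (W ∩ LA h N u ω).card = K := by
    rw [Finset.card_sdiff_add_card_inter, hcardW]
  have h2 : (W \ LA h N u ω).card ≤ (LAc h N u ω).card :=
    Finset.card_le_card (Finset.sdiff_subset_sdiff hWsub Finset.Subset.rfl)
  have h3 : (W ∩ LA h N u ω).card ≤ (S N K ω).card ^ h := by
    calc (W ∩ LA h N u ω).card ≤ ((Fintype.piFinset fun _ : Fin h => S N K ω).image
        fun a => ∑ i, u i * ((a i : ℕ) : ℤ)).card := Finset.card_le_card key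
    _ ≤ (Fintype.piFinset fun _ : Fin h => S N K ω).card := Finset.card_image_le
    _ = (S N K ω).card ^ h := by
        rw [Fintype.card_piFinset]
        simp
  omega

end HMX

namespace HMX2
open HM HMX

lemma bern_prob {p : ℝ} (h0 : 0 ≤ p) (h1 : p ≤ 1) : IsProbabilityMeasure (bern p) := by
  constructor
  rw [bern, Measure.add_apply, Measure.smul_apply, Measure.smul_apply]
  simp [Measure.dirac_apply_of_mem (Set.mem_univ _),
    ← ENNReal.ofReal_add h0 (by linarith : (0:ℝ) ≤ 1 - p)]

lemma bern_singleton_true (p : ℝ) : bern p {true} = ENNReal.ofReal p := by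
  rw [bern, Measure.add_apply, Measure.smul_apply, Measure.smul_apply,
    Measure.dirac_apply, Measure.dirac_apply]
  simp

lemma bern_ind {p : ℝ} (h0 : 0 ≤ p) :
    ∫ t, (if t = true then (1:ℝ) else 0) ∂bern p = p := by
  rw [integral_fintype Integrable.of_finite]
  simp [Measure.real, bern_singleton_true, ENNReal.toReal_ofReal h0]

lemma tuple_int (N : ℕ) {p : ℝ} (h0 : 0 ≤ p) (h1 : p ≤ 1) (B : Finset (Fin (N + 1))) :
    ∫ ω, (∏ b ∈ B, (if ω b = true then (1:ℝ) else 0)) ∂coin N p = p ^ B.card := by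
  classical
  letI : MeasureSpace Bool := ⟨bern p⟩
  haveI : IsProbabilityMeasure (volume : Measure Bool) := bern_prob h0 h1
  haveI : SigmaFinite (volume : Measure Bool) := inferInstance
  have hc : coin N p = (volume : Measure (Fin (N + 1) → Bool)) := rfl
  rw [hc]
  have hrw : ∀ ω : Fin (N + 1) → Bool,
      (∏ b ∈ B, (if ω b = true then (1:ℝ) else 0)) =
      ∏ b : Fin (N + 1),
        (fun t => if b ∈ B then (if t = true then (1:ℝ) else 0) else 1) (ω b) := by
    intro ω
    rw [Finset.prod_ite_mem, Finset.univ_inter]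
  simp_rw [hrw]
  calc (∫ ω : Fin (N + 1) → Bool, ∏ b : Fin (N + 1),
        (fun t => if b ∈ B then (if t = true then (1:ℝ) else 0) else 1) (ω b))
      = ∏ b : Fin (N + 1),
        ∫ t, (if b ∈ B then (if t = true then (1:ℝ) else 0) else 1) :=
        MeasureTheory.integral_fintype_prod_eq_prod
          (f := fun b t => if b ∈ B then (if t = true then (1:ℝ) else 0) else 1)
    _ = ∏ b : Fin (N + 1), (if b ∈ B then p else 1) := by
        refine Finset.prod_congr rfl fun b _ => ?_
        by_cases hb : b ∈ B
        · simp only [hb, if_true]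
          exact bern_ind h0
        · simp only [hb, if_false]
          rw [integral_const]
          rw [probReal_univ, one_smul]
    _ = p ^ B.card := by
        rw [Finset.prod_ite_mem, Finset.univ_inter, Finset.prod_const]

end HMX2

namespace HMX3
open HM HMX HMX2

lemma exp_bound (h N K : ℕ) (hh : 1 ≤ h) {p : ℝ} (h0 : 0 ≤ p) (h1 : p ≤ 1) :
    ∫ ω, ((S N K ω).card : ℝ) ^ h ∂coin N p ≤
      (h : ℝ) ^ h * ∑ r ∈ Finset.Icc 1 h, ((D N K).card : ℝ) ^ r * p ^ r := by
  classical
  haveI : IsProbabilityMeasure (bern p) := bern_prob h0 h1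
  haveI : IsProbabilityMeasure (coin N p) := by
    rw [coin]; infer_instance
  have hpt : ∀ ω : Fin (N + 1) → Bool, ((S N K ω).card : ℝ) ^ h =
      ∑ a ∈ Fintype.piFinset (fun _ : Fin h => D N K),
        ∏ i, (if ω (a i) = true then (1 : ℝ) else 0) := by
    intro ω
    have hcard : ((S N K ω).card : ℝ) = ∑ b ∈ D N K, (if ω b = true then (1 : ℝ) else 0) := by
      rw [S, Finset.card_filter]
      push_cast
      rfl
    rw [hcard, show (∑ b ∈ D N K, (if ω b = true then (1 : ℝ) else 0)) ^ h =
        ∏ _i : Fin h, (∑ b ∈ D N K, (if ω b = true then (1 : ℝ) else 0)) by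
      rw [Finset.prod_const, Finset.card_univ, Fintype.card_fin]]
    rw [Finset.prod_univ_sum]
  simp_rw [hpt]
  rw [integral_finset_sum _ (fun a _ => Integrable.of_finite)]
  have hterm : ∀ a : Fin h → Fin (N + 1),
      (∫ ω, ∏ i, (if ω (a i) = true then (1 : ℝ) else 0) ∂coin N p) =
      p ^ (univ.image a).card := by
    intro a
    have hpr : ∀ ω : Fin (N + 1) → Bool,
        (∏ i, (if ω (a i) = true then (1 : ℝ) else 0)) =
        ∏ b ∈ univ.image a, (if ω b = true then (1 : ℝ) else 0) := by
      intro ω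
      rw [Finset.prod_comp (fun b => if ω b = true then (1 : ℝ) else 0) a]
      refine Finset.prod_congr rfl fun b hb => ?_
      have hne : (univ.filter fun j => a j = b).card ≠ 0 := by
        obtain ⟨i, _, rfl⟩ := Finset.mem_image.mp hb
        exact Finset.card_ne_zero_of_mem (Finset.mem_filter.mpr ⟨Finset.mem_univ _, rfl⟩)
      by_cases hω : ω b = true <;> simp [hω, zero_pow hne]
    simp_rw [hpr]
    exact tuple_int N h0 h1 _
  simp_rw [hterm]
  -- counting
  set A := Fintype.piFinset (fun _ : Fin h => D N K) with hA
  rw [show (∑ a ∈ A, p ^ (univ.image a).card) =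
      ∑ a ∈ A, (fun B : Finset (Fin (N + 1)) => p ^ B.card) (univ.image a) from rfl,
    Finset.sum_comp (fun B : Finset (Fin (N + 1)) => p ^ B.card) (fun a => univ.image a)]
  have hBcard : ∀ B ∈ A.image fun a => univ.image a, B.card ≤ h := by
    intro B hB
    obtain ⟨a, _, rfl⟩ := Finset.mem_image.mp hB
    calc (univ.image a).card ≤ (univ : Finset (Fin h)).card := Finset.card_image_le
    _ = h := by simp
  calc ∑ B ∈ A.image (fun a => univ.image a),
        (A.filter fun a => univ.image a = B).card • p ^ B.card
      ≤ ∑ B ∈ A.image (fun a => univ.image a), (h : ℝ) ^ h * p ^ B.card := by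
        refine Finset.sum_le_sum fun B hB => ?_
        rw [nsmul_eq_mul]
        refine mul_le_mul_of_nonneg_right ?_ (pow_nonneg h0 _)
        have hsub : (A.filter fun a => univ.image a = B) ⊆
            Fintype.piFinset (fun _ : Fin h => B) := by
          intro a ha
          obtain ⟨haA, haB⟩ := Finset.mem_filter.mp ha
          rw [Fintype.mem_piFinset]
          intro i
          rw [← haB]
          exact Finset.mem_image_of_mem _ (Finset.mem_univ _)
        calc ((A.filter fun a => univ.image a = B).card : ℝ)
            ≤ ((Fintype.piFinset fun _ : Fin h => B).card : ℝ) := by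
              exact_mod_cast Finset.card_le_card hsub
          _ = ((B.card : ℝ)) ^ h := by
              rw [Fintype.card_piFinset]
              push_cast
              simp
          _ ≤ (h : ℝ) ^ h := by
              refine pow_le_pow_left₀ (by positivity) ?_ _
              exact_mod_cast hBcard B hB
      _ = (h : ℝ) ^ h * ∑ B ∈ A.image (fun a => univ.image a), p ^ B.card := by
          rw [Finset.mul_sum]
      _ ≤ (h : ℝ) ^ h * ∑ r ∈ Finset.Icc 1 h, ((D N K).card : ℝ) ^ r * p ^ r := by
          refine mul_le_mul_of_nonneg_left ?_ (by positivity)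
          have hsub : A.image (fun a => univ.image a) ⊆
              (Finset.Icc 1 h).biUnion fun r => Finset.powersetCard r (D N K) := by
            intro B hB
            obtain ⟨a, haA, rfl⟩ := Finset.mem_image.mp hB
            rw [Finset.mem_biUnion]
            refine ⟨(univ.image a).card, Finset.mem_Icc.mpr ⟨?_, hBcard _ hB⟩,
              Finset.mem_powersetCard.mpr ⟨?_, rfl⟩⟩
            · rw [Nat.one_le_iff_ne_zero, ← Nat.pos_iff_ne_zero, Finset.card_pos]
              exact (Finset.univ_nonempty_iff.mpr (Fin.pos_iff_nonempty.mp hh)).image _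
            · intro b hb
              obtain ⟨i, _, rfl⟩ := Finset.mem_image.mp hb
              exact Fintype.mem_piFinset.mp (hA ▸ haA) i
          calc ∑ B ∈ A.image (fun a => univ.image a), p ^ B.card
              ≤ ∑ B ∈ (Finset.Icc 1 h).biUnion
                  (fun r => Finset.powersetCard r (D N K)), p ^ B.card :=
                Finset.sum_le_sum_of_subset_of_nonneg hsub
                  (fun B _ _ => pow_nonneg h0 _)
            _ = ∑ r ∈ Finset.Icc 1 h, ∑ B ∈ Finset.powersetCard r (D N K), p ^ B.card := by
                rw [Finset.sum_biUnion]
                intro r hr r' hr' hne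
                rw [Function.onFun, Finset.disjoint_left]
                intro B hB hB'
                exact hne ((Finset.mem_powersetCard.mp hB).2.symm.trans
                  (Finset.mem_powersetCard.mp hB').2)
            _ ≤ ∑ r ∈ Finset.Icc 1 h, ((D N K).card : ℝ) ^ r * p ^ r := by
                refine Finset.sum_le_sum fun r _ => ?_
                have : ∑ B ∈ Finset.powersetCard r (D N K), p ^ B.card =
                    ((D N K).card.choose r : ℝ) * p ^ r := by
                  rw [Finset.sum_congr rfl
                    (fun B hB => by rw [(Finset.mem_powersetCard.mp hB).2]),
                    Finset.sum_const, Finset.card_powersetCard, nsmul_eq_mul]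
                rw [this]
                refine mul_le_mul_of_nonneg_right ?_ (pow_nonneg h0 _)
                exact_mod_cast Nat.choose_le_pow _ _

end HMX3

namespace HMX4
open HM HMX HMX2 HMX3

lemma D_card (N K : ℕ) : (D N K).card ≤ 2 * K := by
  classical
  rw [D, Finset.filter_or]
  refine le_trans (Finset.card_union_le _ _) ?_
  have h1 : (univ.filter fun b : Fin (N + 1) => (b : ℕ) < K).card ≤ K := by
    refine le_trans (Finset.card_le_card_of_injOn (fun b : Fin (N + 1) => (b : ℕ))
      (fun b hb => Finset.mem_range.mpr (Finset.mem_filter.mp hb).2) ?_)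
      (by simp)
    intro b _ b' _ hbb
    exact Fin.ext hbb
  have h2 : (univ.filter fun b : Fin (N + 1) => N < (b : ℕ) + K).card ≤ K := by
    have hinj : ∀ b ∈ univ.filter fun b : Fin (N + 1) => N < (b : ℕ) + K,
        N - (b : ℕ) ∈ Finset.range K := by
      intro b hb
      have := (Finset.mem_filter.mp hb).2
      exact Finset.mem_range.mpr (by omega)
    have := Finset.card_le_card_of_injOn (fun b : Fin (N + 1) => N - (b : ℕ)) hinj ?_
    · simpa using this
    · intro b _ b' _ hbb
      have hb1 : (b : ℕ) ≤ N := Nat.le_of_lt_succ b.2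
      have hb2 : (b' : ℕ) ≤ N := Nat.le_of_lt_succ b'.2
      simp only at hbb
      exact Fin.ext (by omega)
  omega

end HMX4


open HM HMX HMX2 HMX3 HMX4

theorem supercritical_expected_missing_lower_bound
    (h : ℕ) (hh : 3 ≤ h) (u : Fin h → ℤ) (hu : ∀ i, u i ≠ 0)
    (hgcd : Finset.univ.gcd u = 1)
    (p : ℕ → ℝ) (hp01 : ∀ N, p N ∈ Set.Ioo (0 : ℝ) 1)
    (hp0 : Filter.Tendsto p Filter.atTop (nhds 0))
    (hNp : Filter.Tendsto (fun N : ℕ => (N : ℝ) * p N) Filter.atTop Filter.atTop)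
    (hsup : Filter.Tendsto (fun N : ℕ => (N : ℝ) * p N ^ ((h : ℝ) / ((h : ℝ) - 1)))
      Filter.atTop Filter.atTop) :
    ∃ c : ℝ, 0 < c ∧ ∀ᶠ N : ℕ in Filter.atTop,
      c * (1 / p N) ^ ((h : ℝ) / ((h : ℝ) - 1)) ≤
        ∫ ω, ((HM.LAc h N u ω).card : ℝ) ∂HM.coin N (p N) := by
  classical
  set e : ℝ := (h : ℝ) / ((h : ℝ) - 1) with he
  have hh3 : (3 : ℝ) ≤ (h : ℝ) := by exact_mod_cast hh
  have hhe : (0 : ℝ) < (h : ℝ) - 1 := by linarith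
  have he1 : 1 < e := by
    rw [he, lt_div_iff₀ hhe]; linarith
  have hepos : 0 < e := by linarith
  set ε : ℝ := 1 / (4 * 2 ^ h * (h : ℝ) ^ (h + 1)) with hε
  have hden : (1 : ℝ) ≤ 4 * 2 ^ h * (h : ℝ) ^ (h + 1) := by
    have h2 : (1 : ℝ) ≤ 2 ^ h := one_le_pow₀ (by norm_num)
    have h3 : (1 : ℝ) ≤ (h : ℝ) ^ (h + 1) := one_le_pow₀ (by linarith)
    nlinarith
  have hεpos : 0 < ε := by
    rw [hε]
    exact div_pos one_pos (by linarith)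
  have hε1 : ε ≤ 1 := by
    rw [hε, div_le_one (by linarith)]; exact hden
  clear_value e ε
  refine ⟨ε / 4, by positivity, ?_⟩
  -- basic per-N facts
  have hppos : ∀ N, 0 < p N := fun N => (hp01 N).1
  have hinvpos : ∀ N, 0 < 1 / p N := fun N => one_div_pos.mpr (hppos N)
  have hqpos : ∀ N, 0 < (1 / p N) ^ e := fun N => Real.rpow_pos_of_pos (hinvpos N) e
  have hqp_id : ∀ N, (1 / p N) ^ e * p N = (1 / p N) ^ (e - 1) := by
    intro N
    have : p N = (1 / p N) ^ (-1 : ℝ) := by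
      rw [Real.rpow_neg_one]; field_simp
    rw [show (1 / p N) ^ e * p N = (1 / p N) ^ e * (1 / p N) ^ (-1 : ℝ) by rw [← this],
      ← Real.rpow_add (hinvpos N), ← sub_eq_add_neg]
  have hqph_id : ∀ N, ((1 / p N) ^ (e - 1)) ^ (h : ℕ) = (1 / p N) ^ e := by
    intro N
    rw [← Real.rpow_natCast ((1 / p N) ^ (e - 1)) h, ← Real.rpow_mul (hinvpos N).le]
    congr 1
    rw [he]
    field_simp
    ring
  -- tendsto facts
  have hinv : Tendsto (fun N => 1 / p N) atTop atTop := by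
    have : Tendsto p atTop (nhdsWithin 0 (Set.Ioi 0)) :=
      tendsto_nhdsWithin_iff.mpr ⟨hp0, Eventually.of_forall fun N => hppos N⟩
    exact this.inv_tendsto_nhdsGT_zero.congr fun N => by simp [one_div]
  have hq : Tendsto (fun N => (1 / p N) ^ e) atTop atTop :=
    (tendsto_rpow_atTop hepos).comp hinv
  have hqp1 : Tendsto (fun N => (1 / p N) ^ (e - 1)) atTop atTop :=
    (tendsto_rpow_atTop (by linarith)).comp hinv
  -- eventual conditions
  have Ev1 : ∀ᶠ N : ℕ in atTop, 2 ≤ ε * (1 / p N) ^ e :=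
    (hq.const_mul_atTop hεpos).eventually_ge_atTop 2
  have Ev2 : ∀ᶠ N : ℕ in atTop, ε * (1 / p N) ^ e ≤ (N : ℝ) := by
    filter_upwards [hsup.eventually_ge_atTop ε] with N hN
    have hpe : 0 < p N ^ e := Real.rpow_pos_of_pos (hppos N) e
    have hid : (1 / p N) ^ e = (p N ^ e)⁻¹ := by
      rw [one_div, Real.inv_rpow (hppos N).le]
    rw [hid]
    rw [mul_inv_le_iff₀ hpe]
    linarith [hN]
  have Ev3 : ∀ᶠ N : ℕ in atTop, 3 ≤ 2 * ε * (1 / p N) ^ (e - 1) := by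
    have := (hqp1.const_mul_atTop (by positivity : (0:ℝ) < 2 * ε)).eventually_ge_atTop 3
    exact this
  filter_upwards [Ev1, Ev2, Ev3] with N hN1 hN2 hN3
  -- setup
  set q := (1 / p N) ^ e with hq'
  set K := ⌊ε * q⌋₊ with hK
  have hq0 : 0 < q := by rw [hq']; exact hqpos N
  have hKle : (K : ℝ) ≤ ε * q := Nat.floor_le (mul_nonneg hεpos.le hq0.le)
  have hKgt : ε * q - 1 < (K : ℝ) := Nat.sub_one_lt_floor _
  clear_value q K
  have hKhalf : ε * q / 2 ≤ (K : ℝ) := by linarith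
  have hKN : K ≤ N := by
    have : (K : ℝ) ≤ (N : ℝ) := le_trans hKle hN2
    exact_mod_cast this
  have h2Kp : 1 ≤ 2 * (K : ℝ) * (p N) := by
    have hqp := hqp_id N
    have hple : (p N) < 1 := (hp01 N).2
    have : 2 * (K : ℝ) * (p N) > 2 * (ε * q - 1) * (p N) := by
      have := hppos N
      nlinarith
    have h2 : 2 * (ε * q - 1) * (p N) = 2 * ε * (q * (p N)) - 2 * (p N) := by ring
    rw [h2, hq', hqp] at this
    nlinarith [hN3, hppos N]
  have hp0' : (0:ℝ) ≤ (p N) := (hppos N).le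
  have hp1' : (p N) ≤ 1 := (hp01 N).2.le
  haveI : IsProbabilityMeasure (bern (p N)) := bern_prob hp0' hp1'
  haveI : IsProbabilityMeasure (coin N (p N)) := by rw [coin]; infer_instance
  -- integrals
  have int1 : Integrable (fun ω => ((LAc h N u ω).card : ℝ)) (coin N (p N)) :=
    Integrable.of_finite
  have int2 : Integrable (fun ω => ((S N K ω).card : ℝ) ^ h) (coin N (p N)) :=
    Integrable.of_finite
  have det : ∀ ω : Fin (N + 1) → Bool,
      (K : ℝ) - ((S N K ω).card : ℝ) ^ h ≤ ((LAc h N u ω).card : ℝ) := by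
    intro ω
    have := det_bound h N K (by omega) u hu hKN ω
    have := (Nat.cast_le (α := ℝ)).mpr this
    push_cast at this
    linarith
  have step1 : (K : ℝ) - (∫ ω, ((S N K ω).card : ℝ) ^ h ∂coin N (p N)) ≤
      ∫ ω, ((LAc h N u ω).card : ℝ) ∂coin N (p N) := by
    have heq : (∫ ω, ((K : ℝ) - ((S N K ω).card : ℝ) ^ h) ∂coin N (p N)) =
        (K : ℝ) - ∫ ω, ((S N K ω).card : ℝ) ^ h ∂coin N (p N) := by
      rw [integral_sub (integrable_const _) int2, integral_const]
      simp
    rw [← heq]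
    exact integral_mono ((integrable_const _).sub int2) int1 (fun ω => det ω)
  -- expectation bound
  have step2 : (∫ ω, ((S N K ω).card : ℝ) ^ h ∂coin N (p N)) ≤
      (h : ℝ) ^ h * ((h : ℝ) * (2 * (K : ℝ) * (p N)) ^ h) := by
    refine le_trans (exp_bound h N K (by omega) hp0' hp1') ?_
    refine mul_le_mul_of_nonneg_left ?_ (by positivity)
    have hsum : ∑ r ∈ Finset.Icc 1 h, ((D N K).card : ℝ) ^ r * (p N) ^ r ≤
        ∑ _r ∈ Finset.Icc 1 h, (2 * (K : ℝ) * (p N)) ^ h := by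
      refine Finset.sum_le_sum fun r hr => ?_
      have hrh : r ≤ h := (Finset.mem_Icc.mp hr).2
      have hDle : ((D N K).card : ℝ) ≤ 2 * K := by exact_mod_cast D_card N K
      calc ((D N K).card : ℝ) ^ r * (p N) ^ r = (((D N K).card : ℝ) * (p N)) ^ r := by
            rw [mul_pow]
        _ ≤ (2 * (K : ℝ) * (p N)) ^ r := by
            refine pow_le_pow_left₀ (by positivity) ?_ r
            exact mul_le_mul_of_nonneg_right hDle hp0'
        _ ≤ (2 * (K : ℝ) * (p N)) ^ h := pow_le_pow_right₀ h2Kp hrh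
    refine le_trans hsum ?_
    rw [Finset.sum_const, Nat.card_Icc, nsmul_eq_mul]
    simp
  -- algebraic bound on (2Kp)^h
  have step3 : (2 * (K : ℝ) * (p N)) ^ h ≤ 2 ^ h * ε ^ h * q := by
    have h1 : (2 * (K : ℝ) * (p N)) ^ h ≤ (2 * (ε * q) * (p N)) ^ h := by
      refine pow_le_pow_left₀ (by positivity) ?_ h
      have := hppos N
      nlinarith
    refine le_trans h1 ?_
    have h2 : (2 * (ε * q) * (p N)) ^ h = 2 ^ h * ε ^ h * (q * (p N)) ^ h := by ring
    rw [h2, hq', hqp_id N, hqph_id N]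
  have step4 : (h : ℝ) ^ h * ((h : ℝ) * (2 ^ h * ε ^ h * q)) ≤ ε / 4 * q := by
    have hεh : ε ^ h ≤ ε ^ 2 := pow_le_pow_of_le_one hεpos.le hε1 (by omega)
    have hkey : (h : ℝ) ^ (h + 1) * 2 ^ h * ε = 1 / 4 := by
      rw [hε]
      field_simp
    have h5 : (h : ℝ) ^ h * ((h : ℝ) * (2 ^ h * ε ^ h * q)) =
        (h : ℝ) ^ (h + 1) * 2 ^ h * ε ^ h * q := by ring
    rw [h5]
    have h6 : (h : ℝ) ^ (h + 1) * 2 ^ h * ε ^ h ≤ (h : ℝ) ^ (h + 1) * 2 ^ h * ε ^ 2 := by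
      refine mul_le_mul_of_nonneg_left hεh (by positivity)
    have h7 : (h : ℝ) ^ (h + 1) * 2 ^ h * ε ^ 2 = 1 / 4 * ε := by
      rw [pow_two, ← mul_assoc, hkey]
    calc (h : ℝ) ^ (h + 1) * 2 ^ h * ε ^ h * q
        ≤ (h : ℝ) ^ (h + 1) * 2 ^ h * ε ^ 2 * q := mul_le_mul_of_nonneg_right h6 hq0.le
      _ = ε / 4 * q := by rw [h7]; ring
  -- conclude
  have final : ε / 4 * q ≤ (K : ℝ) - (h : ℝ) ^ h * ((h : ℝ) * (2 * (K : ℝ) * (p N)) ^ h) := by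
    have hb : (h : ℝ) ^ h * ((h : ℝ) * (2 * (K : ℝ) * (p N)) ^ h) ≤ ε / 4 * q := by
      refine le_trans ?_ step4
      refine mul_le_mul_of_nonneg_left ?_ (by positivity)
      exact mul_le_mul_of_nonneg_left step3 (by positivity)
    have hx : ε * q / 2 - ε / 4 * q = ε / 4 * q := by ring
    linarith [hKhalf, hb, hx]
  calc ε / 4 * q
      ≤ (K : ℝ) - (h : ℝ) ^ h * ((h : ℝ) * (2 * (K : ℝ) * (p N)) ^ h) := final
    _ ≤ (K : ℝ) - (∫ ω, ((S N K ω).card : ℝ) ^ h ∂coin N (p N)) := by linarith [step2]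
    _ ≤ ∫ ω, ((LAc h N u ω).card : ℝ) ∂coin N (p N) := step1
end
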